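/- arXiv:0803.1248 — 3 statements merged into one kernel-verified Lean document; each statement's English description precedes it below -/
import Mathlib

section
/- Suppose U, W ∈ W₀ and (Uₙ), (Wₙ) are sequences in W₀ with ‖Uₙ − U‖_□ → 0 and ‖Wₙ − W‖_□ → 0 as n → ∞. Then liminf_{n→∞} ‖Wₙ − Uₙ‖₁ ≥ ‖W − U‖₁. -/
open MeasureTheory Filter Topology
open scoped ENNReal

noncomputable section

/-- The unit interval `[0,1]` as a subset of `ℝ`. -/
def I01 : Set ℝ := Set.Icc 0 1

/-- `W₀`: symmetric measurable functions `[0,1]² → [0,1]`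
(represented as functions `ℝ → ℝ → ℝ`, with the relevant values on `[0,1]²`). -/
def IsGraphon (W : ℝ → ℝ → ℝ) : Prop :=
  Measurable (Function.uncurry W) ∧ (∀ x y, W x y = W y x) ∧
    ∀ x y, W x y ∈ Set.Icc (0 : ℝ) 1

/-- The `L¹` norm of a kernel on `[0,1]²`. -/
def l1Norm (W : ℝ → ℝ → ℝ) : ℝ :=
  ∫ x in I01, ∫ y in I01, |W x y|

/-- The cut norm of a kernel on `[0,1]²`. -/
def cutNorm (W : ℝ → ℝ → ℝ) : ℝ :=
  sSup { r : ℝ | ∃ S T : Set ℝ, MeasurableSet S ∧ MeasurableSet T ∧ S ⊆ I01 ∧ T ⊆ I01 ∧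
    r = |∫ x in S, ∫ y in T, W x y| }

/-- An invertible measure preserving map of `[0,1]`. -/
structure InvMP where
  toFun : ℝ → ℝ
  invFun : ℝ → ℝ
  maps : ∀ x ∈ I01, toFun x ∈ I01
  mapsInv : ∀ x ∈ I01, invFun x ∈ I01
  measurePreserving :
    MeasurePreserving toFun (volume.restrict I01) (volume.restrict I01)
  measurePreservingInv :
    MeasurePreserving invFun (volume.restrict I01) (volume.restrict I01)
  leftInv : ∀ x ∈ I01, invFun (toFun x) = x
  rightInv : ∀ x ∈ I01, toFun (invFun x) = x

/-- `δ_□`: the cut distance, infimum of the cut norm over invertible measure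
preserving transformations of `[0,1]`. -/
def deltaCut (U W : ℝ → ℝ → ℝ) : ℝ :=
  ⨅ φ : InvMP, cutNorm (fun x y => U x y - W (φ.toFun x) (φ.toFun y))

/-- `δ₁`: the `L¹` distance minimized over invertible measure preserving
transformations of `[0,1]`. -/
def delta1 (U W : ℝ → ℝ → ℝ) : ℝ :=
  ⨅ φ : InvMP, l1Norm (fun x y => U x y - W (φ.toFun x) (φ.toFun y))



/-- A graph property: for each `n`, a set of simple graphs on `Fin n`. -/
def GraphProp := ∀ n : ℕ, Set (SimpleGraph (Fin n))

/-- Invariance under isomorphism (isomorphic graphs necessarily have the same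
number of vertices). -/
def IsGraphProperty (P : GraphProp) : Prop :=
  ∀ (n : ℕ) (G H : SimpleGraph (Fin n)), Nonempty (G ≃g H) → (G ∈ P n ↔ H ∈ P n)

/-- The normalized edit distance between graphs on a common vertex set. -/
def graphD1 {n : ℕ} (G H : SimpleGraph (Fin n)) : ℝ :=
  (symmDiff G.edgeSet H.edgeSet).ncard / (n ^ 2 : ℝ)

/-- The edit distance from a graph to a graph property (∞ if the property
contains no graph on the same number of nodes). -/
def graphD1P {n : ℕ} (G : SimpleGraph (Fin n)) (P : GraphProp) : ℝ≥0∞ :=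
  ⨅ (H : SimpleGraph (Fin n)) (_ : H ∈ P n), ENNReal.ofReal (graphD1 G H)

open Classical in
/-- The step function `W_G` associated with a graph `G` on `{1,…,n}`:
its value on `((i−1)/n, i/n] × ((j−1)/n, j/n]` is `1` iff `ij ∈ E(G)`. -/
def graphonOf {n : ℕ} (G : SimpleGraph (Fin n)) : ℝ → ℝ → ℝ := fun x y =>
  if ∃ i j : Fin n, G.Adj i j ∧ x ∈ Set.Ioc (((i : ℕ) : ℝ) / n) ((((i : ℕ) : ℝ) + 1) / n)
      ∧ y ∈ Set.Ioc (((j : ℕ) : ℝ) / n) ((((j : ℕ) : ℝ) + 1) / n)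
  then 1 else 0

/-- `H` is (isomorphic to) an induced subgraph of `G`. -/
def IsInducedSubgraph {n k : ℕ} (G : SimpleGraph (Fin n)) (H : SimpleGraph (Fin k)) : Prop :=
  ∃ f : Fin k ↪ Fin n, ∀ i j, H.Adj i j ↔ G.Adj (f i) (f j)

/-- The subgraph of `G` induced on the vertex subset `S` has property `P`
(as a graph on `k = |S|` nodes). -/
def inducedMem {n : ℕ} (G : SimpleGraph (Fin n)) (S : Finset (Fin n)) (k : ℕ)
    (P : GraphProp) : Prop :=
  ∃ H : SimpleGraph (Fin k), H ∈ P k ∧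
    ∃ f : Fin k ↪ Fin n, (∀ i, f i ∈ S) ∧ ∀ i j, H.Adj i j ↔ G.Adj (f i) (f j)

/-- The number of `k`-element vertex subsets of `G` inducing a subgraph with property `P`. -/
def goodCount {n : ℕ} (G : SimpleGraph (Fin n)) (k : ℕ) (P : GraphProp) : ℕ :=
  {S : Finset (Fin n) | S.card = k ∧ inducedMem G S k P}.ncard

/-- Testability of a graph property (Definition 1.1 of the paper). -/
def GraphTestable (P : GraphProp) : Prop :=
  ∃ P' : GraphProp, IsGraphProperty P' ∧
    (∀ (n : ℕ) (G : SimpleGraph (Fin n)), G ∈ P n → ∀ k, 1 ≤ k → k ≤ n →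
      2 * n.choose k ≤ 3 * goodCount G k P') ∧
    (∀ ε : ℝ, 0 < ε → ∃ kε : ℕ, 1 ≤ kε ∧
      ∀ (n : ℕ) (G : SimpleGraph (Fin n)) (k : ℕ), kε ≤ k → k ≤ n →
        ENNReal.ofReal ε ≤ graphD1P G P →
        3 * goodCount G k P' ≤ n.choose k)

def cube (k : ℕ) : Set (Fin k → ℝ) := Set.univ.pi fun _ => I01

open Classical in
/-- The homomorphism density `t(F,W)`. -/
def homDensity {k : ℕ} (F : SimpleGraph (Fin k)) (W : ℝ → ℝ → ℝ) : ℝ :=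
  ∫ x in cube k, ∏ i : Fin k, ∏ j : Fin k,
    if i < j ∧ F.Adj i j then W (x i) (x j) else 1

open Classical in
/-- The induced density `t_ind(F,W)`. -/
def indDensity {k : ℕ} (F : SimpleGraph (Fin k)) (W : ℝ → ℝ → ℝ) : ℝ :=
  ∫ x in cube k, ∏ i : Fin k, ∏ j : Fin k,
    if i < j then (if F.Adj i j then W (x i) (x j) else 1 - W (x i) (x j)) else 1

/-- Isomorphism of functions in `W₀`: equality of all homomorphism densities. -/
def GraphonIso (U W : ℝ → ℝ → ℝ) : Prop :=
  ∀ (k : ℕ) (F : SimpleGraph (Fin k)), homDensity F U = homDensity F W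

open Classical in
/-- `P(G(k,W) ∈ R')`, the probability that the `W`-random graph on `k` nodes
has property `R'`. -/
def probIn (k : ℕ) (W : ℝ → ℝ → ℝ) (R' : GraphProp) : ℝ :=
  ∑ F : SimpleGraph (Fin k), if F ∈ R' k then indDensity F W else 0

/-- The `L¹` distance from `W` to a set `R` of kernels, with value `∞` for `R = ∅`. -/
def d1SetE (W : ℝ → ℝ → ℝ) (R : Set (ℝ → ℝ → ℝ)) : ℝ≥0∞ :=
  ⨅ (U : ℝ → ℝ → ℝ) (_ : U ∈ R), ENNReal.ofReal (l1Norm fun x y => W x y - U x y)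

/-- The cut-norm distance from `W` to a set `R` of kernels, with value `∞` for `R = ∅`. -/
def dCutSetE (W : ℝ → ℝ → ℝ) (R : Set (ℝ → ℝ → ℝ)) : ℝ≥0∞ :=
  ⨅ (U : ℝ → ℝ → ℝ) (_ : U ∈ R), ENNReal.ofReal (cutNorm fun x y => W x y - U x y)

/-- The open ball `B₁(R,c)` (within `W₀`). -/
def ball1 (R : Set (ℝ → ℝ → ℝ)) (c : ℝ) : Set (ℝ → ℝ → ℝ) :=
  {W | IsGraphon W ∧ d1SetE W R < ENNReal.ofReal c}

/-- The open ball `B_□(R,c)` (within `W₀`). -/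
def ballCut (R : Set (ℝ → ℝ → ℝ)) (c : ℝ) : Set (ℝ → ℝ → ℝ) :=
  {W | IsGraphon W ∧ dCutSetE W R < ENNReal.ofReal c}

/-- A graphon property: a set of graphons invariant under isomorphism. -/
def IsGraphonProperty (R : Set (ℝ → ℝ → ℝ)) : Prop :=
  (∀ W ∈ R, IsGraphon W) ∧
    ∀ U W, IsGraphon U → IsGraphon W → GraphonIso U W → (U ∈ R ↔ W ∈ R)

/-- A set of graphons is closed if it is closed in the cut norm. -/
def CutClosed (R : Set (ℝ → ℝ → ℝ)) : Prop :=
  ∀ W, IsGraphon W →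
    (∀ ε : ℝ, 0 < ε → ∃ U ∈ R, cutNorm (fun x y => W x y - U x y) < ε) → W ∈ R

/-- Testability of a graphon property. -/
def GraphonTestable (R : Set (ℝ → ℝ → ℝ)) : Prop :=
  ∃ R' : GraphProp, IsGraphProperty R' ∧
    (∀ W ∈ R, ∀ k : ℕ, 1 ≤ k → (2 : ℝ) / 3 ≤ probIn k W R') ∧
    (∀ ε : ℝ, 0 < ε → ∃ kε : ℕ, 1 ≤ kε ∧ ∀ k, kε ≤ k → ∀ W, IsGraphon W →
      ENNReal.ofReal ε ≤ d1SetE W R → probIn k W R' ≤ 1 / 3)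

/-- The closure `P̄` of a graph property: limits of convergent sequences
of graphs in `P` with sizes tending to infinity. -/
def closureP (P : GraphProp) : Set (ℝ → ℝ → ℝ) :=
  {W | IsGraphon W ∧ ∃ (n : ℕ → ℕ) (G : ∀ m, SimpleGraph (Fin (n m))),
    (∀ m, G m ∈ P (n m)) ∧ Tendsto n atTop atTop ∧
    Tendsto (fun m => deltaCut (graphonOf (G m)) W) atTop (nhds 0)}

/-- A graph property is robust if graphs whose `W_G` is `d₁`-close to `P̄`
are themselves close to `P` in edit distance. -/
def Robust (P : GraphProp) : Prop :=
  ∀ ε : ℝ, 0 < ε → ∃ (N : ℕ) (ε' : ℝ), 1 ≤ N ∧ 0 < ε' ∧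
    ∀ (n : ℕ), N ≤ n → ∀ G : SimpleGraph (Fin n),
      d1SetE (graphonOf G) (closureP P) ≤ ENNReal.ofReal ε' →
      graphD1P G P ≤ ENNReal.ofReal ε

/-- A hereditary graph property: closed under induced subgraphs. -/
def Hereditary (P : GraphProp) : Prop :=
  ∀ (n : ℕ) (G : SimpleGraph (Fin n)), G ∈ P n →
    ∀ (k : ℕ) (H : SimpleGraph (Fin k)), IsInducedSubgraph G H → H ∈ P k

/-- `U` is a flexing of `W`: `U ∈ W₀` agrees with `W` wherever `W` takes value `0` or `1`. -/
def Flexing (U W : ℝ → ℝ → ℝ) : Prop :=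
  IsGraphon U ∧ ∀ x y, (W x y = 0 ∨ W x y = 1) → U x y = W x y

/-- A function property is flexible if it is preserved under flexing. -/
def FlexibleFamily (R : Set (ℝ → ℝ → ℝ)) : Prop :=
  ∀ W ∈ R, ∀ U, Flexing U W → U ∈ R

/-- `U' ≤ W'` almost everywhere on `[0,1]²`. -/
def aeLE (U W : ℝ → ℝ → ℝ) : Prop :=
  ∀ᵐ p ∂(volume.restrict (I01 ×ˢ I01)), U p.1 p.2 ≤ W p.1 p.2

/-- `U ⪯ W`: up to isomorphism, `U ≤ W` almost everywhere. -/
def graphonLE (U W : ℝ → ℝ → ℝ) : Prop :=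
  ∃ U' W', IsGraphon U' ∧ IsGraphon W' ∧ GraphonIso U U' ∧ GraphonIso W W' ∧ aeLE U' W'

/-- The upward closure of a graph property: graphs having a spanning subgraph in `P`. -/
def upP (P : GraphProp) : GraphProp :=
  fun n => {G | ∃ H : SimpleGraph (Fin n), H ∈ P n ∧ H ≤ G}

/-- The upward closure of a function property. -/
def upR (R : Set (ℝ → ℝ → ℝ)) : Set (ℝ → ℝ → ℝ) :=
  {W | IsGraphon W ∧ ∃ U ∈ R, graphonLE U W}

/-- A stepfunction: constant on the products of a finite measurable partition of `[0,1]`. -/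
def IsStepfunction (W : ℝ → ℝ → ℝ) : Prop :=
  ∃ (m : ℕ) (S : Fin m → Set ℝ), (∀ i, MeasurableSet (S i)) ∧
    (⋃ i, S i) = I01 ∧ (∀ i j, i ≠ j → Disjoint (S i) (S j)) ∧
    ∀ i j : Fin m, ∀ x ∈ S i, ∀ x' ∈ S i, ∀ y ∈ S j, ∀ y' ∈ S j, W x y = W x' y'

open Classical in
/-- A testable graphon functional: its value can be estimated from `W`-random graphs. -/
def TestableFunctional (f : (ℝ → ℝ → ℝ) → ℝ) : Prop :=
  ∃ g : ∀ n : ℕ, SimpleGraph (Fin n) → ℝ,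
    (∀ (n : ℕ) (G H : SimpleGraph (Fin n)), Nonempty (G ≃g H) → g n G = g n H) ∧
    ∀ ε : ℝ, 0 < ε → ∃ kε : ℕ, 1 ≤ kε ∧ ∀ k, kε ≤ k → ∀ W, IsGraphon W →
      (∑ F : SimpleGraph (Fin k), if ε < |f W - g k F| then indDensity F W else 0) < 1 / 3


open Set Function

noncomputable def mI : Measure ℝ := volume.restrict I01
noncomputable def pI : Measure (ℝ × ℝ) := mI.prod mI

lemma measurableSet_I01 : MeasurableSet I01 := measurableSet_Icc

instance : IsFiniteMeasure mI := by
  constructor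
  rw [mI, Measure.restrict_apply_univ, I01, Real.volume_Icc]
  norm_num

instance : IsFiniteMeasure pI := by rw [pI]; infer_instance

lemma mI_univ : mI Set.univ = 1 := by
  rw [mI, Measure.restrict_apply_univ, I01, Real.volume_Icc]; norm_num

lemma pI_univ : pI Set.univ = 1 := by
  rw [pI, ← Set.univ_prod_univ, Measure.prod_prod, mI_univ, mul_one]

lemma integ {f : ℝ × ℝ → ℝ} (hf : Measurable f) {c : ℝ} (hb : ∀ p, |f p| ≤ c) :
    Integrable f pI := by
  refine (integrable_const c).mono' hf.aestronglyMeasurable ?_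
  exact Eventually.of_forall fun p => by simpa [Real.norm_eq_abs] using hb p

-- bound over subsets of I01: the inner iterated integral bound
lemma iterated_abs_le {V : ℝ → ℝ → ℝ} (hV : Measurable (Function.uncurry V)) {c : ℝ}
    (hb : ∀ x y, |V x y| ≤ c) {S T : Set ℝ} (hS : MeasurableSet S) (hT : MeasurableSet T)
    (hS1 : S ⊆ I01) (hT1 : T ⊆ I01) :
    |∫ x in S, ∫ y in T, V x y| ≤ c := by
  have hc : 0 ≤ c := le_trans (abs_nonneg _) (hb 0 0)
  have hvolS : volume S ≤ 1 := by
    calc volume S ≤ volume I01 := measure_mono hS1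
    _ = 1 := by rw [I01, Real.volume_Icc]; norm_num
  have hvolT : volume T ≤ 1 := by
    calc volume T ≤ volume I01 := measure_mono hT1
    _ = 1 := by rw [I01, Real.volume_Icc]; norm_num
  have hSfin : volume S < ⊤ := lt_of_le_of_lt hvolS (by norm_num)
  have hTfin : volume T < ⊤ := lt_of_le_of_lt hvolT (by norm_num)
  have hST : (volume S).toReal ≤ 1 := by
    rw [← ENNReal.toReal_one]; exact ENNReal.toReal_mono (by norm_num) hvolS
  have hTT : (volume T).toReal ≤ 1 := by
    rw [← ENNReal.toReal_one]; exact ENNReal.toReal_mono (by norm_num) hvolT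
  have inner : ∀ x, |∫ y in T, V x y| ≤ c := by
    intro x
    have := norm_setIntegral_le_of_norm_le_const (μ := volume) (f := fun y => V x y) hTfin
      (fun y _ => by simpa [Real.norm_eq_abs] using hb x y)
    rw [Real.norm_eq_abs] at this
    calc |∫ y in T, V x y| ≤ c * (volume T).toReal := this
    _ ≤ c * 1 := by exact mul_le_mul_of_nonneg_left hTT hc
    _ = c := mul_one c
  have outer := norm_setIntegral_le_of_norm_le_const (μ := volume)
    (f := fun x => ∫ y in T, V x y) hSfin
    (fun x _ => by simpa [Real.norm_eq_abs] using inner x)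
  · rw [Real.norm_eq_abs] at outer
    calc |∫ x in S, ∫ y in T, V x y| ≤ c * (volume S).toReal := outer
    _ ≤ c * 1 := mul_le_mul_of_nonneg_left hST hc
    _ = c := mul_one c

lemma cutNorm_bddAbove {V : ℝ → ℝ → ℝ} (hV : Measurable (Function.uncurry V)) {c : ℝ}
    (hb : ∀ x y, |V x y| ≤ c) :
    BddAbove { r : ℝ | ∃ S T : Set ℝ, MeasurableSet S ∧ MeasurableSet T ∧ S ⊆ I01 ∧ T ⊆ I01 ∧
      r = |∫ x in S, ∫ y in T, V x y| } := by
  refine ⟨c, fun r hr => ?_⟩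
  obtain ⟨S, T, hS, hT, hS1, hT1, rfl⟩ := hr
  exact iterated_abs_le hV hb hS hT hS1 hT1

lemma cutNorm_nonneg {V : ℝ → ℝ → ℝ} (hV : Measurable (Function.uncurry V)) {c : ℝ}
    (hb : ∀ x y, |V x y| ≤ c) : 0 ≤ cutNorm V := by
  refine le_csSup (cutNorm_bddAbove hV hb) ⟨∅, ∅, MeasurableSet.empty, MeasurableSet.empty,
    Set.empty_subset _, Set.empty_subset _, by simp⟩

lemma rect_le_cut {V : ℝ → ℝ → ℝ} (hV : Measurable (Function.uncurry V)) {c : ℝ}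
    (hb : ∀ x y, |V x y| ≤ c) {S T : Set ℝ} (hS : MeasurableSet S) (hT : MeasurableSet T) :
    |∫ p in S ×ˢ T, V p.1 p.2 ∂pI| ≤ cutNorm V := by
  have hrw : ∫ p in S ×ˢ T, V p.1 p.2 ∂pI = ∫ x in S ∩ I01, ∫ y in T ∩ I01, V x y := by
    have h1 : pI.restrict (S ×ˢ T) = (mI.restrict S).prod (mI.restrict T) := by
      rw [pI, Measure.prod_restrict]
    have h2 : mI.restrict S = volume.restrict (S ∩ I01) := by
      rw [mI, Measure.restrict_restrict hS]
    have h3 : mI.restrict T = volume.restrict (T ∩ I01) := by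
      rw [mI, Measure.restrict_restrict hT]
    rw [show (∫ p in S ×ˢ T, V p.1 p.2 ∂pI) = ∫ p, V p.1 p.2 ∂(pI.restrict (S ×ˢ T)) from rfl,
      h1, h2, h3]
    refine integral_prod _ ?_
    refine (integ hV (fun p => hb p.1 p.2)).mono_measure ?_
    rw [h2.symm, h3.symm, Measure.prod_restrict, ← pI]
    exact Measure.restrict_le_self
  rw [hrw]
  refine le_csSup (cutNorm_bddAbove hV hb) ⟨S ∩ I01, T ∩ I01, hS.inter measurableSet_I01,
    hT.inter measurableSet_I01, Set.inter_subset_right, Set.inter_subset_right, rfl⟩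

lemma univ_le_cut {V : ℝ → ℝ → ℝ} (hV : Measurable (Function.uncurry V)) {c : ℝ}
    (hb : ∀ x y, |V x y| ≤ c) :
    |∫ p, V p.1 p.2 ∂pI| ≤ cutNorm V := by
  have := rect_le_cut hV hb MeasurableSet.univ MeasurableSet.univ
  rwa [Set.univ_prod_univ, Measure.restrict_univ] at this

def RectInd : Set ((ℝ × ℝ) → ℝ) :=
  {f | ∃ S T : Set ℝ, MeasurableSet S ∧ MeasurableSet T ∧ f = (S ×ˢ T).indicator 1}

def GoodSet (B : Set (ℝ × ℝ)) : Prop :=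
  B.indicator (1 : (ℝ × ℝ) → ℝ) ∈ Submodule.span ℝ RectInd

lemma goodSet_rect {S T : Set ℝ} (hS : MeasurableSet S) (hT : MeasurableSet T) :
    GoodSet (S ×ˢ T) := Submodule.subset_span ⟨S, T, hS, hT, rfl⟩

lemma goodSet_univ : GoodSet Set.univ := by
  have := goodSet_rect (S := Set.univ) (T := Set.univ) MeasurableSet.univ MeasurableSet.univ
  rwa [Set.univ_prod_univ] at this

lemma goodSet_empty : GoodSet ∅ := by
  unfold GoodSet
  rw [Set.indicator_empty]
  exact Submodule.zero_mem _

lemma goodSet_compl {B : Set (ℝ × ℝ)} (hB : GoodSet B) : GoodSet Bᶜ := by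
  unfold GoodSet
  have h : Bᶜ.indicator (1 : (ℝ × ℝ) → ℝ) =
      Set.univ.indicator (1 : (ℝ × ℝ) → ℝ) - B.indicator 1 := by
    funext p
    by_cases hp : p ∈ B <;> simp [hp]
  rw [h]
  exact Submodule.sub_mem _ goodSet_univ hB

lemma span_mul {f g : (ℝ × ℝ) → ℝ} (hf : f ∈ Submodule.span ℝ RectInd)
    (hg : g ∈ Submodule.span ℝ RectInd) : f * g ∈ Submodule.span ℝ RectInd := by
  induction hf using Submodule.span_induction with
  | mem r hr =>
    induction hg using Submodule.span_induction with
    | mem q hq =>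
      obtain ⟨S, T, hS, hT, rfl⟩ := hr
      obtain ⟨S', T', hS', hT', rfl⟩ := hq
      refine Submodule.subset_span ⟨S ∩ S', T ∩ T', hS.inter hS', hT.inter hT', ?_⟩
      funext p
      rw [Pi.mul_apply, Set.prod_inter_prod.symm, ← Set.inter_indicator_mul]
      simp [Set.indicator]
    | zero => simpa using Submodule.zero_mem _
    | add x y hx hy ihx ihy => rw [mul_add]; exact Submodule.add_mem _ ihx ihy
    | smul a x hx ihx => rw [mul_smul_comm]; exact Submodule.smul_mem _ _ ihx
  | zero => simpa using Submodule.zero_mem _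
  | add x y hx hy ihx ihy => rw [add_mul]; exact Submodule.add_mem _ ihx ihy
  | smul a x hx ihx => rw [smul_mul_assoc]; exact Submodule.smul_mem _ _ ihx

lemma goodSet_inter {B C : Set (ℝ × ℝ)} (hB : GoodSet B) (hC : GoodSet C) :
    GoodSet (B ∩ C) := by
  unfold GoodSet
  have h : (B ∩ C).indicator (1 : (ℝ × ℝ) → ℝ) = B.indicator 1 * C.indicator 1 := by
    funext p
    rw [Pi.mul_apply, ← Set.inter_indicator_mul]
    simp [Set.indicator]
  rw [h]
  exact span_mul hB hC

lemma goodSet_union {B C : Set (ℝ × ℝ)} (hB : GoodSet B) (hC : GoodSet C) :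
    GoodSet (B ∪ C) := by
  unfold GoodSet
  have h : (B ∪ C).indicator (1 : (ℝ × ℝ) → ℝ) =
      B.indicator 1 + C.indicator 1 - (B ∩ C).indicator 1 := by
    funext p
    by_cases hp : p ∈ B <;> by_cases hq : p ∈ C <;> simp [hp, hq]
  rw [h]
  exact Submodule.sub_mem _ (Submodule.add_mem _ hB hC) (goodSet_inter hB hC)

def Rects : Set (Set (ℝ × ℝ)) :=
  Set.image2 (· ×ˢ ·) { s : Set ℝ | MeasurableSet s } { t : Set ℝ | MeasurableSet t }

lemma goodSet_of_generate {B : Set (ℝ × ℝ)} (hB : B ∈ generateSetAlgebra Rects) :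
    GoodSet B := by
  induction hB with
  | base s hs => obtain ⟨S, hS, T, hT, rfl⟩ := hs; exact goodSet_rect hS hT
  | empty => exact goodSet_empty
  | compl s _ ih => exact goodSet_compl ih
  | union s t _ _ ihs iht => exact goodSet_union ihs iht

lemma exists_good_approx {A : Set (ℝ × ℝ)} (hA : MeasurableSet A) {ε : ℝ} (hε : 0 < ε) :
    ∃ B : Set (ℝ × ℝ), GoodSet B ∧ MeasurableSet B ∧ (pI (symmDiff A B)).toReal < ε := by
  have hdense : pI.MeasureDense (generateSetAlgebra Rects) := by
    refine Measure.MeasureDense.of_generateFrom_isSetAlgebra_finite pI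
      isSetAlgebra_generateSetAlgebra ?_
    rw [generateFrom_generateSetAlgebra_eq]
    exact generateFrom_prod.symm
  obtain ⟨B, hBmem, hBlt⟩ := hdense.approx A hA (measure_ne_top _ _) ε hε
  refine ⟨B, goodSet_of_generate hBmem, hdense.measurable B hBmem, ?_⟩
  rw [← ENNReal.ofReal_toReal (measure_ne_top pI _)] at hBlt
  exact lt_of_not_ge fun h => absurd hBlt (not_lt.2 (ENNReal.ofReal_le_ofReal h))

lemma good_bound {B : Set (ℝ × ℝ)} (hGood : GoodSet B) (hB : MeasurableSet B) :
    ∃ K : ℝ, 0 ≤ K ∧ ∀ V : ℝ → ℝ → ℝ, Measurable (Function.uncurry V) →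
      (∀ x y, |V x y| ≤ 1) → |∫ p in B, V p.1 p.2 ∂pI| ≤ K * cutNorm V := by
  obtain ⟨n, coef, g, hsum⟩ := Submodule.mem_span_set'.1 hGood
  refine ⟨∑ i, |coef i|, Finset.sum_nonneg fun i _ => abs_nonneg _, fun V hV hb => ?_⟩
  have hcut0 : 0 ≤ cutNorm V := cutNorm_nonneg hV hb
  -- rewrite set integral as integral of indicator * V
  have h1 : ∫ p in B, V p.1 p.2 ∂pI = ∫ p, B.indicator (1 : (ℝ×ℝ) → ℝ) p * V p.1 p.2 ∂pI := by
    rw [← integral_indicator hB]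
    congr 1
    funext p
    by_cases hp : p ∈ B <;> simp [hp]
  rw [h1, ← hsum]
  have h2 : ∀ p : ℝ × ℝ, (∑ i, coef i • (g i : (ℝ×ℝ) → ℝ)) p * V p.1 p.2
      = ∑ i, coef i * ((g i : (ℝ×ℝ) → ℝ) p * V p.1 p.2) := by
    intro p
    rw [Finset.sum_apply, Finset.sum_mul]
    congr 1
    funext i
    rw [Pi.smul_apply, smul_eq_mul, mul_assoc]
  have hginteg : ∀ i : Fin n, Integrable (fun p : ℝ×ℝ => (g i : (ℝ×ℝ) → ℝ) p * V p.1 p.2) pI ∧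
      |∫ p, (g i : (ℝ×ℝ) → ℝ) p * V p.1 p.2 ∂pI| ≤ cutNorm V := by
    intro i
    obtain ⟨S, T, hS, hT, hgi⟩ := (g i).2
    have hind : (fun p : ℝ×ℝ => (g i : (ℝ×ℝ) → ℝ) p * V p.1 p.2)
        = (S ×ˢ T).indicator (fun p : ℝ×ℝ => V p.1 p.2) := by
      funext p
      rw [hgi]
      by_cases hp : p ∈ S ×ˢ T <;> simp [hp]
    constructor
    · rw [hind]
      refine (integ hV (fun p => hb p.1 p.2)).indicator ((hS.prod hT))
    · rw [hind, integral_indicator (hS.prod hT)]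
      exact rect_le_cut hV hb hS hT
  calc |∫ p, (∑ i, coef i • (g i : (ℝ×ℝ) → ℝ)) p * V p.1 p.2 ∂pI|
      = |∫ p, ∑ i, coef i * ((g i : (ℝ×ℝ) → ℝ) p * V p.1 p.2) ∂pI| := by
        congr 1; exact integral_congr_ae (Eventually.of_forall fun p => h2 p)
    _ = |∑ i, coef i * ∫ p, (g i : (ℝ×ℝ) → ℝ) p * V p.1 p.2 ∂pI| := by
        rw [integral_finset_sum]
        · congr 1
          exact Finset.sum_congr rfl fun i _ => integral_const_mul _ _
        · exact fun i _ => ((hginteg i).1).const_mul _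
    _ ≤ ∑ i, |coef i * ∫ p, (g i : (ℝ×ℝ) → ℝ) p * V p.1 p.2 ∂pI| :=
        Finset.abs_sum_le_sum_abs _ _
    _ ≤ ∑ i, |coef i| * cutNorm V := by
        refine Finset.sum_le_sum fun i _ => ?_
        rw [abs_mul]
        exact mul_le_mul_of_nonneg_left (hginteg i).2 (abs_nonneg _)
    _ = (∑ i, |coef i|) * cutNorm V := by rw [Finset.sum_mul]

lemma setIntegral_symmdiff_bound {f : ℝ × ℝ → ℝ} (hf : Measurable f) {c : ℝ} (hc : 0 ≤ c)
    (hb : ∀ p, |f p| ≤ c) {A B : Set (ℝ × ℝ)} (hA : MeasurableSet A) (hB : MeasurableSet B) :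
    |∫ p in A, f p ∂pI - ∫ p in B, f p ∂pI| ≤ 2 * c * (pI (symmDiff A B)).toReal := by
  have hint : Integrable f pI := integ hf hb
  have hAB : ∫ p in A, f p ∂pI = ∫ p in A ∩ B, f p ∂pI + ∫ p in A \ B, f p ∂pI :=
    (integral_inter_add_diff hB hint.integrableOn).symm
  have hBA : ∫ p in B, f p ∂pI = ∫ p in A ∩ B, f p ∂pI + ∫ p in B \ A, f p ∂pI := by
    rw [Set.inter_comm]
    exact (integral_inter_add_diff hA hint.integrableOn).symm
  rw [hAB, hBA]
  have key : ∀ C : Set (ℝ × ℝ), C ⊆ symmDiff A B → |∫ p in C, f p ∂pI| ≤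
      c * (pI (symmDiff A B)).toReal := by
    intro C hC
    have h1 := norm_setIntegral_le_of_norm_le_const (μ := pI) (s := C) (f := f) (measure_lt_top _ _)
      (fun p _ => by simpa [Real.norm_eq_abs] using hb p)
    rw [Real.norm_eq_abs] at h1
    refine h1.trans (mul_le_mul_of_nonneg_left ?_ hc)
    exact ENNReal.toReal_mono (measure_ne_top _ _) (measure_mono hC)
  have e1 := key (A \ B) (by rw [Set.symmDiff_def]; exact Set.subset_union_left)
  have e2 := key (B \ A) (by rw [Set.symmDiff_def]; exact Set.subset_union_right)
  have : ∫ p in A ∩ B, f p ∂pI + ∫ p in A \ B, f p ∂pI -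
      (∫ p in A ∩ B, f p ∂pI + ∫ p in B \ A, f p ∂pI)
      = ∫ p in A \ B, f p ∂pI - ∫ p in B \ A, f p ∂pI := by ring
  rw [this]
  calc |∫ p in A \ B, f p ∂pI - ∫ p in B \ A, f p ∂pI|
      ≤ |∫ p in A \ B, f p ∂pI| + |∫ p in B \ A, f p ∂pI| := abs_sub _ _
    _ ≤ c * (pI (symmDiff A B)).toReal + c * (pI (symmDiff A B)).toReal := add_le_add e1 e2
    _ = 2 * c * (pI (symmDiff A B)).toReal := by ring

lemma graphon_diff_bound {P Q : ℝ → ℝ → ℝ} (hP : IsGraphon P) (hQ : IsGraphon Q) :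
    ∀ x y, |P x y - Q x y| ≤ 1 := by
  intro x y
  have h1 := hP.2.2 x y
  have h2 := hQ.2.2 x y
  rw [Set.mem_Icc] at h1 h2
  rw [abs_le]
  constructor <;> linarith [h1.1, h1.2, h2.1, h2.2]

lemma l1_eq_pI {f : ℝ → ℝ → ℝ} (hf : Measurable (Function.uncurry f))
    {c : ℝ} (hb : ∀ x y, |f x y| ≤ c) :
    l1Norm f = ∫ p, |f p.1 p.2| ∂pI := by
  have hint : Integrable (fun p : ℝ × ℝ => |f p.1 p.2|) pI :=
    (integ hf (fun p => hb p.1 p.2)).abs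
  rw [l1Norm, pI] at *
  exact (integral_prod _ hint).symm

-- main combined cut-control lemma
lemma cut_control {A : Set (ℝ × ℝ)} (hA : MeasurableSet A) {ε : ℝ} (hε : 0 < ε) :
    ∃ K : ℝ, 0 ≤ K ∧ ∀ V : ℝ → ℝ → ℝ, Measurable (Function.uncurry V) →
      (∀ x y, |V x y| ≤ 1) → |∫ p in A, V p.1 p.2 ∂pI| ≤ K * cutNorm V + 2 * ε := by
  obtain ⟨B, hGood, hBmeas, hBlt⟩ := exists_good_approx hA hε
  obtain ⟨K, hK0, hK⟩ := good_bound hGood hBmeas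
  refine ⟨K, hK0, fun V hV hb => ?_⟩
  have h1 := setIntegral_symmdiff_bound (f := fun p : ℝ × ℝ => V p.1 p.2) hV zero_le_one
    (fun p => hb p.1 p.2) hA hBmeas
  have h2 := hK V hV hb
  calc |∫ p in A, V p.1 p.2 ∂pI|
      ≤ |∫ p in A, V p.1 p.2 ∂pI - ∫ p in B, V p.1 p.2 ∂pI| + |∫ p in B, V p.1 p.2 ∂pI| := by
        have := abs_add_le (∫ p in A, V p.1 p.2 ∂pI - ∫ p in B, V p.1 p.2 ∂pI)
          (∫ p in B, V p.1 p.2 ∂pI)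
        simpa using this
    _ ≤ 2 * 1 * (pI (symmDiff A B)).toReal + K * cutNorm V := add_le_add h1 h2
    _ ≤ 2 * ε + K * cutNorm V := by
        have : (pI (symmDiff A B)).toReal ≤ ε := le_of_lt hBlt
        nlinarith
    _ = K * cutNorm V + 2 * ε := by ring

lemma abs_integral_identity {F : ℝ × ℝ → ℝ} (hF : Integrable F pI) {A : Set (ℝ × ℝ)}
    (hA : MeasurableSet A) (hsign : ∀ p, p ∈ A ↔ 0 ≤ F p) :
    ∫ p, |F p| ∂pI = 2 * ∫ p in A, F p ∂pI - ∫ p, F p ∂pI := by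
  have h1 : ∫ p in A, |F p| ∂pI + ∫ p in Aᶜ, |F p| ∂pI = ∫ p, |F p| ∂pI :=
    integral_add_compl hA hF.abs
  have h2 : ∫ p in A, F p ∂pI + ∫ p in Aᶜ, F p ∂pI = ∫ p, F p ∂pI :=
    integral_add_compl hA hF
  have e1 : ∫ p in A, |F p| ∂pI = ∫ p in A, F p ∂pI :=
    setIntegral_congr_fun hA fun p hp => abs_of_nonneg ((hsign p).1 hp)
  have e2 : ∫ p in Aᶜ, |F p| ∂pI = ∫ p in Aᶜ, (-F p) ∂pI := by
    refine setIntegral_congr_fun hA.compl fun p hp => ?_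
    have : ¬ (0 ≤ F p) := fun h => hp ((hsign p).2 h)
    rw [abs_of_nonpos (le_of_not_ge this)]
  rw [e1, e2, integral_neg] at h1
  linarith

lemma abs_integral_ge {G : ℝ × ℝ → ℝ} (hG : Integrable G pI) {A : Set (ℝ × ℝ)}
    (hA : MeasurableSet A) :
    2 * ∫ p in A, G p ∂pI - ∫ p, G p ∂pI ≤ ∫ p, |G p| ∂pI := by
  have h1 : ∫ p in A, |G p| ∂pI + ∫ p in Aᶜ, |G p| ∂pI = ∫ p, |G p| ∂pI :=
    integral_add_compl hA hG.abs
  have h2 : ∫ p in A, G p ∂pI + ∫ p in Aᶜ, G p ∂pI = ∫ p, G p ∂pI :=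
    integral_add_compl hA hG
  have e1 : ∫ p in A, G p ∂pI ≤ ∫ p in A, |G p| ∂pI :=
    integral_mono hG.integrableOn hG.abs.integrableOn fun p => le_abs_self _
  have e2 : - ∫ p in Aᶜ, G p ∂pI ≤ ∫ p in Aᶜ, |G p| ∂pI := by
    rw [← integral_neg]
    exact integral_mono hG.neg.integrableOn hG.abs.integrableOn fun p => neg_le_abs _
  linarith

lemma pI_integral_abs_le_one {F : ℝ × ℝ → ℝ} (hF : Measurable F) (hb : ∀ p, |F p| ≤ 1) :
    ∫ p, |F p| ∂pI ≤ 1 := by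
  have h := integral_mono ((integ hF hb).abs) (integrable_const 1) fun p => hb p
  rwa [integral_const, measureReal_def, pI_univ, ENNReal.toReal_one, one_smul] at h

theorem liminf_l1_ge_of_cut_tendsto
    (U W : ℝ → ℝ → ℝ) (Useq Wseq : ℕ → ℝ → ℝ → ℝ)
    (hU : IsGraphon U) (hW : IsGraphon W)
    (hUseq : ∀ n, IsGraphon (Useq n)) (hWseq : ∀ n, IsGraphon (Wseq n))
    (hUconv : Tendsto (fun n => cutNorm fun x y => Useq n x y - U x y) atTop (nhds 0))
    (hWconv : Tendsto (fun n => cutNorm fun x y => Wseq n x y - W x y) atTop (nhds 0)) :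
    l1Norm (fun x y => W x y - U x y) ≤
      Filter.liminf (fun n => l1Norm fun x y => Wseq n x y - Useq n x y) atTop := by
  -- basic measurability and bounds
  have hFm : Measurable (Function.uncurry fun x y => W x y - U x y) := hW.1.sub hU.1
  have hFb : ∀ x y, |W x y - U x y| ≤ 1 := graphon_diff_bound hW hU
  have hFint : Integrable (fun p : ℝ × ℝ => W p.1 p.2 - U p.1 p.2) pI :=
    integ hFm fun p => hFb p.1 p.2
  have hGm : ∀ n, Measurable (Function.uncurry fun x y => Wseq n x y - W x y) :=
    fun n => (hWseq n).1.sub hW.1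
  have hGb : ∀ n x y, |Wseq n x y - W x y| ≤ 1 := fun n => graphon_diff_bound (hWseq n) hW
  have hHm : ∀ n, Measurable (Function.uncurry fun x y => Useq n x y - U x y) :=
    fun n => (hUseq n).1.sub hU.1
  have hHb : ∀ n x y, |Useq n x y - U x y| ≤ 1 := fun n => graphon_diff_bound (hUseq n) hU
  have hGint : ∀ n, Integrable (fun p : ℝ × ℝ => Wseq n p.1 p.2 - W p.1 p.2) pI :=
    fun n => integ (hGm n) fun p => hGb n p.1 p.2
  have hHint : ∀ n, Integrable (fun p : ℝ × ℝ => Useq n p.1 p.2 - U p.1 p.2) pI :=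
    fun n => integ (hHm n) fun p => hHb n p.1 p.2
  have hFnm : ∀ n, Measurable (Function.uncurry fun x y => Wseq n x y - Useq n x y) :=
    fun n => (hWseq n).1.sub (hUseq n).1
  have hFnb : ∀ n x y, |Wseq n x y - Useq n x y| ≤ 1 :=
    fun n => graphon_diff_bound (hWseq n) (hUseq n)
  have hFnint : ∀ n, Integrable (fun p : ℝ × ℝ => Wseq n p.1 p.2 - Useq n p.1 p.2) pI :=
    fun n => integ (hFnm n) fun p => hFnb n p.1 p.2
  -- the sign set
  set A : Set (ℝ × ℝ) := {p : ℝ × ℝ | U p.1 p.2 ≤ W p.1 p.2} with hAdef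
  have hA : MeasurableSet A := measurableSet_le hU.1 hW.1
  -- rewrite the target l1 norms
  have hl1F : l1Norm (fun x y => W x y - U x y) = ∫ p, |W p.1 p.2 - U p.1 p.2| ∂pI :=
    l1_eq_pI hFm hFb
  have hl1Fn : ∀ n, l1Norm (fun x y => Wseq n x y - Useq n x y)
      = ∫ p, |Wseq n p.1 p.2 - Useq n p.1 p.2| ∂pI :=
    fun n => l1_eq_pI (hFnm n) (hFnb n)
  -- boundedness of the sequence (for coboundedness of liminf)
  have hbdd : ∀ n, l1Norm (fun x y => Wseq n x y - Useq n x y) ≤ 1 := by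
    intro n
    rw [hl1Fn n]
    exact pI_integral_abs_le_one (hFnm n) fun p => hFnb n p.1 p.2
  have hcobdd : IsCoboundedUnder (· ≥ ·)  atTop
      (fun n => l1Norm fun x y => Wseq n x y - Useq n x y) := by
    refine Filter.IsBoundedUnder.isCoboundedUnder_ge (isBoundedUnder_of ⟨1, hbdd⟩)
  -- it suffices to prove the bound up to δ
  refine le_of_forall_pos_le_add fun δ hδ => ?_
  rw [← sub_le_iff_le_add]
  refine le_liminf_of_le hcobdd ?_
  -- choose the approximation of A
  have hε : (0 : ℝ) < δ / 16 := by linarith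
  obtain ⟨K, hK0, hK⟩ := cut_control hA hε
  -- eventual smallness of cut norms
  set aN : ℕ → ℝ := fun n => cutNorm fun x y => Wseq n x y - W x y with haN
  set bN : ℕ → ℝ := fun n => cutNorm fun x y => Useq n x y - U x y with hbN
  have haN0 : ∀ n, 0 ≤ aN n := fun n => cutNorm_nonneg (hGm n) (fun x y => hGb n x y)
  have hbN0 : ∀ n, 0 ≤ bN n := fun n => cutNorm_nonneg (hHm n) (fun x y => hHb n x y)
  have hsum : Tendsto (fun n => aN n + bN n) atTop (nhds 0) := by
    have := hWconv.add hUconv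
    simpa using this
  have hev : ∀ᶠ n in atTop, aN n + bN n < δ / (2 * (2 * K + 1)) := by
    refine hsum.eventually_lt_const ?_
    positivity
  filter_upwards [hev] with n hn
  -- the main chain of inequalities for a fixed n
  rw [hl1F, hl1Fn n]
  -- identity for the limit function
  have hid : ∫ p, |W p.1 p.2 - U p.1 p.2| ∂pI
      = 2 * ∫ p in A, (W p.1 p.2 - U p.1 p.2) ∂pI - ∫ p, (W p.1 p.2 - U p.1 p.2) ∂pI := by
    refine abs_integral_identity hFint hA fun p => ?_
    simp [hAdef, sub_nonneg]
  have hge : 2 * (∫ p in A, (Wseq n p.1 p.2 - Useq n p.1 p.2) ∂pI)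
      - ∫ p, (Wseq n p.1 p.2 - Useq n p.1 p.2) ∂pI
      ≤ ∫ p, |Wseq n p.1 p.2 - Useq n p.1 p.2| ∂pI :=
    abs_integral_ge (hFnint n) hA
  -- decompose Wseq n - Useq n = (W - U) + (Wseq n - W) - (Useq n - U)
  have hdecA : ∫ p in A, (Wseq n p.1 p.2 - Useq n p.1 p.2) ∂pI
      = ∫ p in A, (W p.1 p.2 - U p.1 p.2) ∂pI
        + ∫ p in A, (Wseq n p.1 p.2 - W p.1 p.2) ∂pI
        - ∫ p in A, (Useq n p.1 p.2 - U p.1 p.2) ∂pI := by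
    have e : (fun p : ℝ × ℝ => Wseq n p.1 p.2 - Useq n p.1 p.2)
        = fun p : ℝ × ℝ => (W p.1 p.2 - U p.1 p.2) + (Wseq n p.1 p.2 - W p.1 p.2)
          - (Useq n p.1 p.2 - U p.1 p.2) := by funext p; ring
    have i1 : Integrable (fun p : ℝ × ℝ =>
        (W p.1 p.2 - U p.1 p.2) + (Wseq n p.1 p.2 - W p.1 p.2)) pI := hFint.add (hGint n)
    rw [show (∫ p in A, (Wseq n p.1 p.2 - Useq n p.1 p.2) ∂pI)
        = ∫ p in A, ((W p.1 p.2 - U p.1 p.2) + (Wseq n p.1 p.2 - W p.1 p.2)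
          - (Useq n p.1 p.2 - U p.1 p.2)) ∂pI from by rw [e],
      integral_sub i1.integrableOn (hHint n).integrableOn,
      integral_add hFint.integrableOn (hGint n).integrableOn]
  have hdecT : ∫ p, (Wseq n p.1 p.2 - Useq n p.1 p.2) ∂pI
      = ∫ p, (W p.1 p.2 - U p.1 p.2) ∂pI
        + ∫ p, (Wseq n p.1 p.2 - W p.1 p.2) ∂pI
        - ∫ p, (Useq n p.1 p.2 - U p.1 p.2) ∂pI := by
    have e : (fun p : ℝ × ℝ => Wseq n p.1 p.2 - Useq n p.1 p.2)
        = fun p : ℝ × ℝ => (W p.1 p.2 - U p.1 p.2) + (Wseq n p.1 p.2 - W p.1 p.2)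
          - (Useq n p.1 p.2 - U p.1 p.2) := by funext p; ring
    have i1 : Integrable (fun p : ℝ × ℝ =>
        (W p.1 p.2 - U p.1 p.2) + (Wseq n p.1 p.2 - W p.1 p.2)) pI := hFint.add (hGint n)
    rw [show (∫ p, (Wseq n p.1 p.2 - Useq n p.1 p.2) ∂pI)
        = ∫ p, ((W p.1 p.2 - U p.1 p.2) + (Wseq n p.1 p.2 - W p.1 p.2)
          - (Useq n p.1 p.2 - U p.1 p.2)) ∂pI from by rw [e],
      integral_sub i1 (hHint n), integral_add hFint (hGint n)]
  -- cut norm bounds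
  have hGA : |∫ p in A, (Wseq n p.1 p.2 - W p.1 p.2) ∂pI| ≤ K * aN n + 2 * (δ / 16) :=
    hK _ (hGm n) (hGb n)
  have hHA : |∫ p in A, (Useq n p.1 p.2 - U p.1 p.2) ∂pI| ≤ K * bN n + 2 * (δ / 16) :=
    hK _ (hHm n) (hHb n)
  have hGT : |∫ p, (Wseq n p.1 p.2 - W p.1 p.2) ∂pI| ≤ aN n :=
    univ_le_cut (hGm n) (hGb n)
  have hHT : |∫ p, (Useq n p.1 p.2 - U p.1 p.2) ∂pI| ≤ bN n :=
    univ_le_cut (hHm n) (hHb n)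
  -- assemble
  rw [hid]
  have habs1 := abs_le.1 hGA
  have habs2 := abs_le.1 hHA
  have habs3 := abs_le.1 hGT
  have habs4 := abs_le.1 hHT
  have hKsmall : (2 * K + 1) * (aN n + bN n) ≤ δ / 2 := by
    have h1 : (0:ℝ) < 2 * (2 * K + 1) := by positivity
    rw [← le_div_iff₀' (by positivity)]
    calc aN n + bN n ≤ δ / (2 * (2 * K + 1)) := le_of_lt hn
    _ = δ / 2 / (2 * K + 1) := by field_simp
  refine le_trans ?_ hge
  rw [hdecA, hdecT]
  nlinarith [haN0 n, hbN0 n]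

end
end

section
/- Suppose U ∈ W₀ and (Uₙ) is a sequence in W₀ with ‖Uₙ − U‖_□ → 0 as n → ∞. Then for every W ∈ W₀ there exists a sequence (Wₙ) in W₀ such that ‖Wₙ − W‖_□ → 0 and ‖Uₙ − Wₙ‖₁ → ‖U − W‖₁ as n → ∞. -/
open MeasureTheory Filter Topology
open scoped ENNReal

noncomputable section

namespace CutAux
open MeasureTheory MeasurableSpace Set Function
open scoped symmDiff

def nuP : Measure (ℝ × ℝ) := (volume.restrict I01).prod (volume.restrict I01)

lemma I01_meas : MeasurableSet I01 := measurableSet_Icc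

instance : IsFiniteMeasure (volume.restrict I01) :=
  ⟨by rw [Measure.restrict_apply_univ]; simp [I01]⟩

instance : IsFiniteMeasure nuP := by unfold nuP; infer_instance

lemma integrable_of_bdd {f : ℝ × ℝ → ℝ} {μ : Measure (ℝ × ℝ)} [IsFiniteMeasure μ]
    (hf : AEStronglyMeasurable f μ) {M : ℝ} (hb : ∀ p, |f p| ≤ M) : Integrable f μ :=
  (integrable_const M).mono' hf (ae_of_all _ fun p => by simpa [Real.norm_eq_abs] using hb p)

lemma restrict_sub (S : Set ℝ) (hS : MeasurableSet S) (hS1 : S ⊆ I01) :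
    volume.restrict S = (volume.restrict I01).restrict S := by
  rw [Measure.restrict_restrict hS, inter_eq_left.mpr hS1]

lemma finiteS {S : Set ℝ} (hS1 : S ⊆ I01) : IsFiniteMeasure (volume.restrict S) := by
  constructor
  rw [Measure.restrict_apply_univ]
  exact lt_of_le_of_lt (measure_mono hS1) (by simp [I01])

lemma iter_eq {f : ℝ → ℝ → ℝ} (hf : Measurable (uncurry f)) {M : ℝ}
    (hb : ∀ p : ℝ × ℝ, |uncurry f p| ≤ M) {S T : Set ℝ} (hS : MeasurableSet S)
    (hT : MeasurableSet T) (hS1 : S ⊆ I01) (hT1 : T ⊆ I01) :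
    ∫ x in S, ∫ y in T, f x y = ∫ p in S ×ˢ T, f p.1 p.2 ∂nuP := by
  haveI := finiteS hS1
  haveI := finiteS hT1
  have hint : Integrable (uncurry f) ((volume.restrict S).prod (volume.restrict T)) :=
    integrable_of_bdd hf.aestronglyMeasurable hb
  have h := integral_integral (μ := volume.restrict S) (ν := volume.restrict T) hint
  rw [h, restrict_sub S hS hS1, restrict_sub T hT hT1, Measure.prod_restrict]
  rfl


lemma memb_le {f : ℝ → ℝ → ℝ} {M : ℝ} (hM : 0 ≤ M) (hb : ∀ x y, |f x y| ≤ M)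
    {S T : Set ℝ} (hS1 : S ⊆ I01) (hT1 : T ⊆ I01) :
    |∫ x in S, ∫ y in T, f x y| ≤ M := by
  haveI : IsFiniteMeasure (volume.restrict S) :=
    ⟨by rw [Measure.restrict_apply_univ]
        exact lt_of_le_of_lt (measure_mono hS1) (by simp [I01])⟩
  haveI : IsFiniteMeasure (volume.restrict T) :=
    ⟨by rw [Measure.restrict_apply_univ]
        exact lt_of_le_of_lt (measure_mono hT1) (by simp [I01])⟩
  have hT : (volume.restrict T) Set.univ ≤ 1 := by
    rw [Measure.restrict_apply_univ]
    calc volume T ≤ volume I01 := measure_mono hT1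
    _ = 1 := by simp [I01]
  have hS' : (volume.restrict S) Set.univ ≤ 1 := by
    rw [Measure.restrict_apply_univ]
    calc volume S ≤ volume I01 := measure_mono hS1
    _ = 1 := by simp [I01]
  have inner : ∀ x : ℝ, ‖∫ y in T, f x y‖ ≤ M := by
    intro x
    calc ‖∫ y in T, f x y‖ ≤ M * ((volume.restrict T) Set.univ).toReal :=
      norm_integral_le_of_norm_le_const (ae_of_all _ fun y => by
        simpa [Real.norm_eq_abs] using hb x y)
    _ ≤ M * 1 := by
        gcongr
        exact ENNReal.toReal_le_of_le_ofReal (by norm_num) (by simpa using hT)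
    _ = M := mul_one M
  calc |∫ x in S, ∫ y in T, f x y| ≤ M * ((volume.restrict S) Set.univ).toReal :=
    norm_integral_le_of_norm_le_const (ae_of_all _ fun x => inner x)
  _ ≤ M * 1 := by
      gcongr
      exact ENNReal.toReal_le_of_le_ofReal (by norm_num) (by simpa using hS')
  _ = M := mul_one M

def cutSet (f : ℝ → ℝ → ℝ) : Set ℝ :=
  { r : ℝ | ∃ S T : Set ℝ, MeasurableSet S ∧ MeasurableSet T ∧ S ⊆ I01 ∧ T ⊆ I01 ∧
    r = |∫ x in S, ∫ y in T, f x y| }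

lemma cutNorm_eq (f : ℝ → ℝ → ℝ) : cutNorm f = sSup (cutSet f) := rfl

lemma zero_mem_cutSet (f : ℝ → ℝ → ℝ) : (0:ℝ) ∈ cutSet f :=
  ⟨∅, ∅, MeasurableSet.empty, MeasurableSet.empty, empty_subset _, empty_subset _, by simp⟩

lemma cutSet_bddAbove {f : ℝ → ℝ → ℝ} {M : ℝ} (hM : 0 ≤ M) (hb : ∀ x y, |f x y| ≤ M) :
    BddAbove (cutSet f) := by
  refine ⟨M, fun r hr => ?_⟩
  obtain ⟨S, T, _, _, hS1, hT1, rfl⟩ := hr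
  exact memb_le hM hb hS1 hT1

lemma cutNorm_nonneg {f : ℝ → ℝ → ℝ} {M : ℝ} (hM : 0 ≤ M) (hb : ∀ x y, |f x y| ≤ M) :
    0 ≤ cutNorm f :=
  le_csSup (cutSet_bddAbove hM hb) (zero_mem_cutSet f)

lemma le_cutNorm {f : ℝ → ℝ → ℝ} {M : ℝ} (hM : 0 ≤ M) (hb : ∀ x y, |f x y| ≤ M)
    {S T : Set ℝ} (hS : MeasurableSet S) (hT : MeasurableSet T) (hS1 : S ⊆ I01) (hT1 : T ⊆ I01) :
    |∫ x in S, ∫ y in T, f x y| ≤ cutNorm f :=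
  le_csSup (cutSet_bddAbove hM hb) ⟨S, T, hS, hT, hS1, hT1, rfl⟩

lemma cutNorm_le {f : ℝ → ℝ → ℝ} {a : ℝ} (ha : 0 ≤ a)
    (h : ∀ S T : Set ℝ, MeasurableSet S → MeasurableSet T → S ⊆ I01 → T ⊆ I01 →
      |∫ x in S, ∫ y in T, f x y| ≤ a) : cutNorm f ≤ a := by
  apply Real.sSup_le _ ha
  rintro r ⟨S, T, hS, hT, hS1, hT1, rfl⟩
  exact h S T hS hT hS1 hT1


/-- The "good" kernels: rectangle combinations, with the uniform cut-pairing bound. -/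
def Good (s : ℝ × ℝ → ℝ) : Prop :=
  Measurable s ∧ (∃ M, ∀ p, |s p| ≤ M) ∧ ∃ C, 0 ≤ C ∧
    ∀ (h : ℝ × ℝ → ℝ), Measurable h → (∀ p, |h p| ≤ 1) →
      ∀ δ : ℝ, 0 ≤ δ →
      (∀ A B : Set ℝ, MeasurableSet A → MeasurableSet B → |∫ p in A ×ˢ B, h p ∂nuP| ≤ δ) →
      ∀ S T : Set ℝ, MeasurableSet S → MeasurableSet T →
        |∫ p in S ×ˢ T, s p * h p ∂nuP| ≤ C * δ

lemma good_zero : Good (fun _ => (0:ℝ)) :=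
  ⟨measurable_const, ⟨0, fun _ => by simp⟩, 0, le_refl _, by intros; simp⟩

lemma good_indicator_rect {A B : Set ℝ} (hA : MeasurableSet A) (hB : MeasurableSet B) :
    Good ((A ×ˢ B).indicator fun _ => (1:ℝ)) := by
  refine ⟨measurable_const.indicator (hA.prod hB), ⟨1, fun p => ?_⟩, 1, zero_le_one, ?_⟩
  · by_cases hp : p ∈ A ×ˢ B <;> simp [indicator, hp]
  · intro h hmeas hhb δ hδ hrect S T hS hT
    have key : ∀ p, (A ×ˢ B).indicator (fun _ => (1:ℝ)) p * h p
        = (A ×ˢ B).indicator h p := by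
      intro p; by_cases hp : p ∈ A ×ˢ B <;> simp [indicator, hp]
    rw [one_mul]
    calc |∫ p in S ×ˢ T, (A ×ˢ B).indicator (fun _ => (1:ℝ)) p * h p ∂nuP|
        = |∫ p in S ×ˢ T, (A ×ˢ B).indicator h p ∂nuP| := by
          congr 1; exact integral_congr_ae (ae_of_all _ fun p => key p)
      _ = |∫ p in (S ×ˢ T) ∩ (A ×ˢ B), h p ∂nuP| := by
          rw [setIntegral_indicator (hA.prod hB)]
      _ = |∫ p in (S ∩ A) ×ˢ (T ∩ B), h p ∂nuP| := by rw [Set.prod_inter_prod]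
      _ ≤ δ := hrect _ _ (hS.inter hA) (hT.inter hB)

lemma good_mul_indicator_rect {A B : Set ℝ} (hA : MeasurableSet A) (hB : MeasurableSet B)
    {f : ℝ × ℝ → ℝ} (hf : Good f) :
    Good (fun p => (A ×ˢ B).indicator (fun _ => (1:ℝ)) p * f p) := by
  obtain ⟨hfm, ⟨M, hM⟩, C, hC0, hC⟩ := hf
  refine ⟨(measurable_const.indicator (hA.prod hB)).mul hfm, ⟨|M|, fun p => ?_⟩, C, hC0, ?_⟩
  · by_cases hp : p ∈ A ×ˢ B
    · simp only [indicator, hp, if_pos, one_mul]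
      exact le_trans (hM p) (le_abs_self M)
    · simp [indicator, hp]
  · intro h hmeas hhb δ hδ hrect S T hS hT
    have hmem : ∀ p : ℝ × ℝ, p ∈ (S ∩ A) ×ˢ (T ∩ B) ↔ (p ∈ S ×ˢ T ∧ p ∈ A ×ˢ B) := by
      intro p
      simp only [Set.mem_prod, Set.mem_inter_iff]
      tauto
    have key : ∀ p, (S ×ˢ T).indicator (fun q => (A ×ˢ B).indicator (fun _ => (1:ℝ)) q * f q * h q) p
        = ((S ∩ A) ×ˢ (T ∩ B)).indicator (fun q => f q * h q) p := by
      intro p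
      by_cases hp1 : p ∈ S ×ˢ T <;> by_cases hp2 : p ∈ A ×ˢ B
      · rw [indicator_of_mem hp1, indicator_of_mem ((hmem p).2 ⟨hp1, hp2⟩),
          indicator_of_mem hp2, one_mul]
      · rw [indicator_of_mem hp1, indicator_of_notMem (fun hc => hp2 ((hmem p).1 hc).2),
          indicator_of_notMem hp2, zero_mul, zero_mul]
      · rw [indicator_of_notMem hp1, indicator_of_notMem (fun hc => hp1 ((hmem p).1 hc).1)]
      · rw [indicator_of_notMem hp1, indicator_of_notMem (fun hc => hp1 ((hmem p).1 hc).1)]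
    calc |∫ p in S ×ˢ T, (A ×ˢ B).indicator (fun _ => (1:ℝ)) p * f p * h p ∂nuP|
        = |∫ p in (S ∩ A) ×ˢ (T ∩ B), f p * h p ∂nuP| := by
          rw [← integral_indicator (hS.prod hT), ← integral_indicator ((hS.inter hA).prod (hT.inter hB))]
          congr 1
          exact integral_congr_ae (ae_of_all _ key)
      _ ≤ C * δ := hC h hmeas hhb δ hδ hrect _ _ (hS.inter hA) (hT.inter hB)

lemma good_add {f g : ℝ × ℝ → ℝ} (hf : Good f) (hg : Good g) : Good (fun p => f p + g p) := by
  obtain ⟨hfm, ⟨M, hM⟩, C, hC0, hC⟩ := hf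
  obtain ⟨hgm, ⟨M', hM'⟩, C', hC0', hC'⟩ := hg
  refine ⟨hfm.add hgm, ⟨M + M', fun p => (abs_add_le _ _).trans (add_le_add (hM p) (hM' p))⟩,
    C + C', by positivity, ?_⟩
  intro h hmeas hhb δ hδ hrect S T hS hT
  haveI : IsFiniteMeasure (nuP.restrict (S ×ˢ T)) := by
    constructor
    rw [Measure.restrict_apply_univ]
    exact measure_lt_top nuP _
  have hif : Integrable (fun p => f p * h p) (nuP.restrict (S ×ˢ T)) :=
    integrable_of_bdd (hfm.mul hmeas).aestronglyMeasurable
      (M := M * 1) (fun p => by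
        rw [abs_mul]
        exact mul_le_mul (hM p) (hhb p) (abs_nonneg _) ((abs_nonneg _).trans (hM p)))
  have hig : Integrable (fun p => g p * h p) (nuP.restrict (S ×ˢ T)) :=
    integrable_of_bdd (hgm.mul hmeas).aestronglyMeasurable
      (M := M' * 1) (fun p => by
        rw [abs_mul]
        exact mul_le_mul (hM' p) (hhb p) (abs_nonneg _) ((abs_nonneg _).trans (hM' p)))
  have heq : ∫ p in S ×ˢ T, (f p + g p) * h p ∂nuP
      = (∫ p in S ×ˢ T, f p * h p ∂nuP) + ∫ p in S ×ˢ T, g p * h p ∂nuP := by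
    rw [← integral_add hif hig]
    congr 1; funext p; ring
  show |∫ p in S ×ˢ T, (f p + g p) * h p ∂nuP| ≤ (C + C') * δ
  rw [heq, add_mul]
  exact (abs_add_le _ _).trans (add_le_add (hC h hmeas hhb δ hδ hrect S T hS hT)
    (hC' h hmeas hhb δ hδ hrect S T hS hT))

lemma good_smul {f : ℝ × ℝ → ℝ} (hf : Good f) (c : ℝ) : Good (fun p => c * f p) := by
  obtain ⟨hfm, ⟨M, hM⟩, C, hC0, hC⟩ := hf
  refine ⟨measurable_const.mul hfm, ⟨|c| * M, fun p => by
    rw [abs_mul]; exact mul_le_mul_of_nonneg_left (hM p) (abs_nonneg c)⟩,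
    |c| * C, by positivity, ?_⟩
  intro h hmeas hhb δ hδ hrect S T hS hT
  have : ∫ p in S ×ˢ T, c * f p * h p ∂nuP = c * ∫ p in S ×ˢ T, f p * h p ∂nuP := by
    rw [← integral_const_mul]; congr 1; funext p; ring
  show |∫ p in S ×ˢ T, c * f p * h p ∂nuP| ≤ |c| * C * δ
  rw [this, abs_mul, mul_assoc]
  exact mul_le_mul_of_nonneg_left (hC h hmeas hhb δ hδ hrect S T hS hT) (abs_nonneg c)

lemma good_sub {f g : ℝ × ℝ → ℝ} (hf : Good f) (hg : Good g) : Good (fun p => f p - g p) := by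
  have := good_add hf (good_smul hg (-1))
  simpa [sub_eq_add_neg] using this


/-- measurable rectangles. -/
def Rects : Set (Set (ℝ × ℝ)) :=
  image2 (· ×ˢ ·) { s : Set ℝ | MeasurableSet s } { t : Set ℝ | MeasurableSet t }

lemma hgen_rects : (inferInstance : MeasurableSpace (ℝ × ℝ))
    = MeasurableSpace.generateFrom (MeasureTheory.generateSetAlgebra Rects) := by
  rw [generateFrom_generateSetAlgebra_eq]
  exact (generateFrom_prod).symm

lemma good_indicator_algebra {t : Set (ℝ × ℝ)} (ht : t ∈ MeasureTheory.generateSetAlgebra Rects) :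
    Good (t.indicator fun _ => (1:ℝ)) ∧
      ∀ f, Good f → Good (fun p => t.indicator (fun _ => (1:ℝ)) p * f p) := by
  induction ht with
  | base s s_mem =>
    obtain ⟨A, hA, B, hB, rfl⟩ := s_mem
    exact ⟨good_indicator_rect hA hB, fun f hf => good_mul_indicator_rect hA hB hf⟩
  | empty =>
    constructor
    · simpa using good_zero
    · intro f hf
      simpa using good_zero
  | compl s hs ih =>
    have h1 : ∀ p : ℝ × ℝ, (sᶜ).indicator (fun _ => (1:ℝ)) p
        = 1 - s.indicator (fun _ => (1:ℝ)) p := by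
      intro p
      by_cases hp : p ∈ s <;> simp [indicator, hp]
    have huniv : Good (fun _ : ℝ × ℝ => (1:ℝ)) := by
      have := good_indicator_rect (A := univ) (B := univ) MeasurableSet.univ MeasurableSet.univ
      simpa [Set.univ_prod_univ] using this
    constructor
    · have := good_sub huniv ih.1
      have heq : (fun p => (1:ℝ) - s.indicator (fun _ => (1:ℝ)) p)
          = (sᶜ).indicator fun _ => (1:ℝ) := by
        funext p; rw [h1]
      rwa [heq] at this
    · intro f hf
      have := good_sub hf (ih.2 f hf)
      have heq : (fun p => f p - s.indicator (fun _ => (1:ℝ)) p * f p)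
          = fun p => (sᶜ).indicator (fun _ => (1:ℝ)) p * f p := by
        funext p; rw [h1]; ring
      rwa [heq] at this
  | union s t hs ht ihs iht =>
    have h1 : ∀ p : ℝ × ℝ, (s ∪ t).indicator (fun _ => (1:ℝ)) p
        = s.indicator (fun _ => (1:ℝ)) p + t.indicator (fun _ => (1:ℝ)) p
          - s.indicator (fun _ => (1:ℝ)) p * t.indicator (fun _ => (1:ℝ)) p := by
      intro p
      by_cases hp1 : p ∈ s <;> by_cases hp2 : p ∈ t <;>
        simp [indicator, hp1, hp2]
    constructor
    · have := good_sub (good_add ihs.1 iht.1) (ihs.2 _ iht.1)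
      have heq : (fun p => (s.indicator (fun _ => (1:ℝ)) p + t.indicator (fun _ => (1:ℝ)) p)
          - s.indicator (fun _ => (1:ℝ)) p * t.indicator (fun _ => (1:ℝ)) p)
          = (s ∪ t).indicator fun _ => (1:ℝ) := by
        funext p; rw [h1]
      rwa [heq] at this
    · intro f hf
      have := good_sub (good_add (ihs.2 f hf) (iht.2 f hf))
        (ihs.2 _ (iht.2 f hf))
      have heq : (fun p => (s.indicator (fun _ => (1:ℝ)) p * f p
            + t.indicator (fun _ => (1:ℝ)) p * f p)
          - s.indicator (fun _ => (1:ℝ)) p * (t.indicator (fun _ => (1:ℝ)) p * f p))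
          = fun p => (s ∪ t).indicator (fun _ => (1:ℝ)) p * f p := by
        funext p; rw [h1]; ring
      rwa [heq] at this

lemma good_indicator_const {t : Set (ℝ × ℝ)}
    (ht : t ∈ MeasureTheory.generateSetAlgebra Rects) (c : ℝ) :
    Good (t.indicator fun _ => c) := by
  have := good_smul (good_indicator_algebra ht).1 c
  have heq : (fun p => c * t.indicator (fun _ => (1:ℝ)) p) = t.indicator fun _ => c := by
    funext p; by_cases hp : p ∈ t <;> simp [indicator, hp]
  rwa [heq] at this


lemma integral_abs_eq {u : ℝ × ℝ → ℝ} (hu : AEStronglyMeasurable u nuP) :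
    ∫ p, |u p| ∂nuP = (eLpNorm u 1 nuP).toReal := by
  rw [eLpNorm_one_eq_lintegral_enorm,
    integral_eq_lintegral_of_nonneg_ae (ae_of_all _ fun p => abs_nonneg (u p))
      (by simpa [Real.norm_eq_abs] using hu.norm)]
  congr 1
  apply lintegral_congr
  intro a
  rw [← ofReal_norm, Real.norm_eq_abs]

/-- Any simple function can be `L¹`-approximated by Good functions. -/
lemma simpleFunc_approx (g : SimpleFunc (ℝ × ℝ) ℝ) :
    ∀ ε : ℝ, 0 < ε → ∃ s, Good s ∧ ∫ p, |g p - s p| ∂nuP ≤ ε := by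
  have hdense : nuP.MeasureDense (MeasureTheory.generateSetAlgebra Rects) :=
    Measure.MeasureDense.of_generateFrom_isSetAlgebra_finite nuP
      MeasureTheory.isSetAlgebra_generateSetAlgebra hgen_rects
  induction g using SimpleFunc.induction with
  | const c hE =>
    rename_i E
    intro ε hε
    obtain ⟨t, ht_mem, ht⟩ := hdense.approx E hE (measure_ne_top nuP E) (ε / (|c| + 1))
      (by positivity)
    refine ⟨t.indicator fun _ => c, good_indicator_const ht_mem c, ?_⟩
    have htm : MeasurableSet t := hdense.measurable t ht_mem
    have key : ∀ p : ℝ × ℝ,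
        |(SimpleFunc.piecewise E hE (SimpleFunc.const _ c) (SimpleFunc.const _ 0)) p
          - t.indicator (fun _ => c) p|
        = (E ∆ t).indicator (fun _ => |c|) p := by
      intro p
      by_cases hp1 : p ∈ E <;> by_cases hp2 : p ∈ t <;>
        simp [indicator, Set.mem_symmDiff, hp1, hp2, SimpleFunc.piecewise_apply]
    calc ∫ p, |(SimpleFunc.piecewise E hE (SimpleFunc.const _ c) (SimpleFunc.const _ 0)) p
          - t.indicator (fun _ => c) p| ∂nuP
        = ∫ p, (E ∆ t).indicator (fun _ => |c|) p ∂nuP :=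
          integral_congr_ae (ae_of_all _ key)
      _ = (nuP (E ∆ t)).toReal • |c| := integral_indicator_const |c| (hE.symmDiff htm)
      _ ≤ (ε / (|c| + 1)) * |c| := by
          rw [smul_eq_mul]
          apply mul_le_mul_of_nonneg_right _ (abs_nonneg c)
          exact le_of_lt ((ENNReal.lt_ofReal_iff_toReal_lt (measure_ne_top nuP _)).1 ht)
      _ ≤ ε := by
          rw [div_mul_eq_mul_div, div_le_iff₀ (by positivity)]
          nlinarith [abs_nonneg c]
  | add hdisj ihf ihg =>
    rename_i f g
    intro ε hε
    obtain ⟨s₁, hs₁, hs₁'⟩ := ihf (ε / 2) (by positivity)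
    obtain ⟨s₂, hs₂, hs₂'⟩ := ihg (ε / 2) (by positivity)
    refine ⟨fun p => s₁ p + s₂ p, good_add hs₁ hs₂, ?_⟩
    obtain ⟨M₁, hM₁⟩ := hs₁.2.1
    obtain ⟨M₂, hM₂⟩ := hs₂.2.1
    obtain ⟨Cf, hCf⟩ := f.exists_forall_norm_le
    obtain ⟨Cg, hCg⟩ := g.exists_forall_norm_le
    have int1 : Integrable (fun p => |f p - s₁ p|) nuP :=
      (integrable_of_bdd (M := Cf + M₁) ((f.measurable.sub hs₁.1).aestronglyMeasurable)
        (fun p => (abs_sub _ _).trans (add_le_add (by simpa [Real.norm_eq_abs] using hCf p) (hM₁ p)))).abs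
    have int2 : Integrable (fun p => |g p - s₂ p|) nuP :=
      (integrable_of_bdd (M := Cg + M₂) ((g.measurable.sub hs₂.1).aestronglyMeasurable)
        (fun p => (abs_sub _ _).trans (add_le_add (by simpa [Real.norm_eq_abs] using hCg p) (hM₂ p)))).abs
    have intL : Integrable (fun p => |(f + g) p - (s₁ p + s₂ p)|) nuP := by
      apply Integrable.abs
      apply integrable_of_bdd (M := (Cf + M₁) + (Cg + M₂))
        (((f.measurable.add g.measurable).sub (hs₁.1.add hs₂.1)).aestronglyMeasurable)
      intro p
      have h0 : f p + g p - (s₁ p + s₂ p) = (f p - s₁ p) + (g p - s₂ p) := by ring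
      show |f p + g p - (s₁ p + s₂ p)| ≤ _
      rw [h0]
      refine (abs_add_le _ _).trans (add_le_add ?_ ?_)
      · exact (abs_sub _ _).trans (add_le_add (by simpa [Real.norm_eq_abs] using hCf p) (hM₁ p))
      · exact (abs_sub _ _).trans (add_le_add (by simpa [Real.norm_eq_abs] using hCg p) (hM₂ p))
    calc ∫ p, |(f + g) p - (s₁ p + s₂ p)| ∂nuP
        ≤ ∫ p, (|f p - s₁ p| + |g p - s₂ p|) ∂nuP := by
          apply integral_mono intL (int1.add int2)
          intro p
          simp only [SimpleFunc.coe_add, Pi.add_apply]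
          have h0 : f p + g p - (s₁ p + s₂ p) = (f p - s₁ p) + (g p - s₂ p) := by ring
          rw [h0]
          exact abs_add_le _ _
      _ = (∫ p, |f p - s₁ p| ∂nuP) + ∫ p, |g p - s₂ p| ∂nuP := integral_add int1 int2
      _ ≤ ε / 2 + ε / 2 := add_le_add hs₁' hs₂'
      _ = ε := by ring


/-- Bounded measurable functions can be `L¹`-approximated by Good functions. -/
lemma bounded_approx {m : ℝ × ℝ → ℝ} (hm : Measurable m) (hb : ∀ p, |m p| ≤ 1) :
    ∀ ε : ℝ, 0 < ε → ∃ s, Good s ∧ ∫ p, |m p - s p| ∂nuP ≤ ε := by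
  intro ε hε
  have hmem : MemLp m 1 nuP :=
    MemLp.of_bound hm.aestronglyMeasurable 1
      (ae_of_all _ fun p => by simpa [Real.norm_eq_abs] using hb p)
  obtain ⟨g, hg, hgmem⟩ := hmem.exists_simpleFunc_eLpNorm_sub_lt (by simp)
    (ε := ENNReal.ofReal (ε / 2)) (by simp [hε.le]; positivity)
  obtain ⟨s, hs, hs'⟩ := simpleFunc_approx g (ε / 2) (by positivity)
  refine ⟨s, hs, ?_⟩
  obtain ⟨M, hM⟩ := hs.2.1
  obtain ⟨Cg, hCg⟩ := g.exists_forall_norm_le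
  have int1 : Integrable (fun p => |m p - g p|) nuP :=
    (integrable_of_bdd (M := 1 + Cg) ((hm.sub g.measurable).aestronglyMeasurable)
      (fun p => (abs_sub _ _).trans (add_le_add (hb p)
        (by simpa [Real.norm_eq_abs] using hCg p)))).abs
  have int2 : Integrable (fun p => |g p - s p|) nuP :=
    (integrable_of_bdd (M := Cg + M) ((g.measurable.sub hs.1).aestronglyMeasurable)
      (fun p => (abs_sub _ _).trans (add_le_add
        (by simpa [Real.norm_eq_abs] using hCg p) (hM p)))).abs
  have intL : Integrable (fun p => |m p - s p|) nuP :=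
    (integrable_of_bdd (M := 1 + M) ((hm.sub hs.1).aestronglyMeasurable)
      (fun p => (abs_sub _ _).trans (add_le_add (hb p) (hM p)))).abs
  have h1 : ∫ p, |m p - g p| ∂nuP ≤ ε / 2 := by
    erw [integral_abs_eq (hm.sub g.measurable).aestronglyMeasurable]
    exact le_of_lt (ENNReal.toReal_lt_of_lt_ofReal
      (by simpa [Pi.sub_apply] using hg))
  calc ∫ p, |m p - s p| ∂nuP
      ≤ ∫ p, (|m p - g p| + |g p - s p|) ∂nuP := by
        apply integral_mono intL (int1.add int2)
        intro p
        show |m p - s p| ≤ |m p - g p| + |g p - s p|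
        have h0 : m p - s p = (m p - g p) + (g p - s p) := by ring
        rw [h0]
        exact abs_add_le _ _
    _ = (∫ p, |m p - g p| ∂nuP) + ∫ p, |g p - s p| ∂nuP := integral_add int1 int2
    _ ≤ ε / 2 + ε / 2 := add_le_add h1 hs'
    _ = ε := by ring

/-- Key lemma: pairing against a fixed bounded kernel is uniformly controlled
by rectangle integrals. -/
lemma lemmaA {m : ℝ × ℝ → ℝ} (hm : Measurable m) (hb : ∀ p, |m p| ≤ 1)
    {ε : ℝ} (hε : 0 < ε) :
    ∃ δ : ℝ, 0 < δ ∧ ∀ h : ℝ × ℝ → ℝ, Measurable h → (∀ p, |h p| ≤ 1) →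
      (∀ A B : Set ℝ, MeasurableSet A → MeasurableSet B → |∫ p in A ×ˢ B, h p ∂nuP| ≤ δ) →
      ∀ S T : Set ℝ, MeasurableSet S → MeasurableSet T →
        |∫ p in S ×ˢ T, m p * h p ∂nuP| ≤ ε := by
  obtain ⟨s, hs, hs'⟩ := bounded_approx hm hb (ε / 2) (by positivity)
  obtain ⟨hsm, ⟨M, hM⟩, C, hC0, hC⟩ := hs
  refine ⟨ε / (2 * (C + 1)), by positivity, ?_⟩
  intro h hmeas hhb hrect S T hS hT
  haveI : IsFiniteMeasure (nuP.restrict (S ×ˢ T)) := by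
    constructor
    rw [Measure.restrict_apply_univ]
    exact measure_lt_top nuP _
  have int1 : Integrable (fun p => (m p - s p) * h p) (nuP.restrict (S ×ˢ T)) :=
    integrable_of_bdd ((hm.sub hsm).mul hmeas).aestronglyMeasurable (M := (1 + M) * 1)
      (fun p => by
        rw [abs_mul]
        exact mul_le_mul ((abs_sub _ _).trans (add_le_add (hb p) (hM p))) (hhb p)
          (abs_nonneg _) (le_trans (abs_nonneg (m p - s p))
            ((abs_sub _ _).trans (add_le_add (hb p) (hM p)))))
  have int2 : Integrable (fun p => s p * h p) (nuP.restrict (S ×ˢ T)) :=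
    integrable_of_bdd (hsm.mul hmeas).aestronglyMeasurable (M := M * 1)
      (fun p => by
        rw [abs_mul]
        exact mul_le_mul (hM p) (hhb p) (abs_nonneg _) ((abs_nonneg _).trans (hM p)))
  have hsplit : ∫ p in S ×ˢ T, m p * h p ∂nuP
      = (∫ p in S ×ˢ T, (m p - s p) * h p ∂nuP) + ∫ p in S ×ˢ T, s p * h p ∂nuP := by
    rw [← integral_add int1 int2]
    congr 1; funext p; ring
  have intabs : Integrable (fun p => |m p - s p|) nuP :=
    (integrable_of_bdd (M := 1 + M) ((hm.sub hsm).aestronglyMeasurable)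
      (fun p => (abs_sub _ _).trans (add_le_add (hb p) (hM p)))).abs
  have h1 : |∫ p in S ×ˢ T, (m p - s p) * h p ∂nuP| ≤ ε / 2 := by
    calc |∫ p in S ×ˢ T, (m p - s p) * h p ∂nuP|
        ≤ ∫ p in S ×ˢ T, |(m p - s p) * h p| ∂nuP := by
          simpa [Real.norm_eq_abs, abs_mul] using
            norm_integral_le_integral_norm (μ := nuP.restrict (S ×ˢ T))
              (fun p => (m p - s p) * h p)
      _ ≤ ∫ p in S ×ˢ T, |m p - s p| ∂nuP := by
          apply integral_mono int1.abs (intabs.integrableOn)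
          intro p
          show |(m p - s p) * h p| ≤ |m p - s p|
          rw [abs_mul]
          calc |m p - s p| * |h p| ≤ |m p - s p| * 1 :=
            mul_le_mul_of_nonneg_left (hhb p) (abs_nonneg _)
          _ = |m p - s p| := mul_one _
      _ ≤ ∫ p, |m p - s p| ∂nuP :=
          setIntegral_le_integral intabs (ae_of_all _ fun p => abs_nonneg _)
      _ ≤ ε / 2 := hs'
  have h2 : |∫ p in S ×ˢ T, s p * h p ∂nuP| ≤ C * (ε / (2 * (C + 1))) :=
    hC h hmeas hhb _ (by positivity) hrect S T hS hT
  calc |∫ p in S ×ˢ T, m p * h p ∂nuP|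
      ≤ |∫ p in S ×ˢ T, (m p - s p) * h p ∂nuP| + |∫ p in S ×ˢ T, s p * h p ∂nuP| := by
        rw [hsplit]; exact abs_add_le _ _
    _ ≤ ε / 2 + C * (ε / (2 * (C + 1))) := add_le_add h1 h2
    _ ≤ ε / 2 + ε / 2 := by
        apply add_le_add_right
        have h2 : C * (ε / (2 * (C + 1))) = (C * ε) / (2 * (C + 1)) := by ring
        rw [h2, div_le_div_iff₀ (by positivity) (by norm_num)]
        nlinarith [hC0, hε.le]
    _ = ε := by ring


def gg (u w : ℝ) : ℝ := if u = 0 then 1 else w / u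
def hh (u w : ℝ) : ℝ := (w - u) / (1 - u)
/-- the coupled modification -/
def wn (un u w : ℝ) : ℝ := if w ≤ u then un * gg u w else un + (1 - un) * hh u w
def km (u w : ℝ) : ℝ := if w ≤ u then 1 - gg u w else -(hh u w)
def mk (u w : ℝ) : ℝ := if w ≤ u then gg u w else 1 - hh u w

variable {u w un : ℝ}

lemma gg_mem (hu : u ∈ Icc (0:ℝ) 1) (hw : w ∈ Icc (0:ℝ) 1) (hwu : w ≤ u) :
    gg u w ∈ Icc (0:ℝ) 1 := by
  unfold gg
  by_cases h : u = 0
  · simp [h]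
  · have hu0 : 0 < u := lt_of_le_of_ne hu.1 (Ne.symm h)
    simp only [h, if_false]
    constructor
    · exact div_nonneg hw.1 hu.1
    · rw [div_le_one hu0]; exact hwu

lemma gg_mul (hu : u ∈ Icc (0:ℝ) 1) (hw : w ∈ Icc (0:ℝ) 1) (hwu : w ≤ u) :
    u * gg u w = w := by
  unfold gg
  by_cases h : u = 0
  · have : w = 0 := le_antisymm (h ▸ hwu) hw.1
    simp [h, this]
  · simp only [h, if_false]; field_simp [h]

lemma hh_mem (hu : u ∈ Icc (0:ℝ) 1) (hw : w ∈ Icc (0:ℝ) 1) (hwu : ¬ w ≤ u) :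
    hh u w ∈ Icc (0:ℝ) 1 := by
  push_neg at hwu
  have h1 : u < 1 := lt_of_lt_of_le hwu hw.2
  have h2 : (0:ℝ) < 1 - u := by linarith
  unfold hh
  constructor
  · exact div_nonneg (by linarith) (by linarith)
  · rw [div_le_one h2]; linarith [hw.2]

lemma hh_mul (hu : u ∈ Icc (0:ℝ) 1) (hw : w ∈ Icc (0:ℝ) 1) (hwu : ¬ w ≤ u) :
    (1 - u) * hh u w = w - u := by
  push_neg at hwu
  have h1 : u < 1 := lt_of_lt_of_le hwu hw.2
  have h2 : (1:ℝ) - u ≠ 0 := by linarith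
  unfold hh
  field_simp

lemma wn_mem (hun : un ∈ Icc (0:ℝ) 1) (hu : u ∈ Icc (0:ℝ) 1) (hw : w ∈ Icc (0:ℝ) 1) :
    wn un u w ∈ Icc (0:ℝ) 1 := by
  unfold wn
  by_cases h : w ≤ u
  · simp only [h, if_true]
    have hg := gg_mem hu hw h
    constructor
    · exact mul_nonneg hun.1 hg.1
    · calc un * gg u w ≤ 1 * 1 := mul_le_mul hun.2 hg.2 hg.1 zero_le_one
      _ = 1 := mul_one 1
  · simp only [h, if_false]
    have hg := hh_mem hu hw h
    constructor
    · have : 0 ≤ (1 - un) * hh u w := mul_nonneg (by linarith [hun.2]) hg.1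
      linarith [hun.1]
    · have : (1 - un) * hh u w ≤ (1 - un) * 1 :=
        mul_le_mul_of_nonneg_left hg.2 (by linarith [hun.2])
      linarith

lemma wn_sub (hun : un ∈ Icc (0:ℝ) 1) (hu : u ∈ Icc (0:ℝ) 1) (hw : w ∈ Icc (0:ℝ) 1) :
    wn un u w - w = (un - u) * mk u w := by
  unfold wn mk
  by_cases h : w ≤ u
  · simp only [h, if_true]
    have := gg_mul hu hw h
    nlinarith [this]
  · simp only [h, if_false]
    have := hh_mul hu hw h
    nlinarith [this]

lemma abs_sub_wn (hun : un ∈ Icc (0:ℝ) 1) (hu : u ∈ Icc (0:ℝ) 1) (hw : w ∈ Icc (0:ℝ) 1) :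
    |un - wn un u w| = |u - w| + (un - u) * km u w := by
  unfold wn km
  by_cases h : w ≤ u
  · simp only [h, if_true]
    have hg := gg_mem hu hw h
    have hm := gg_mul hu hw h
    have h1 : un - un * gg u w = un * (1 - gg u w) := by ring
    have h2 : 0 ≤ un * (1 - gg u w) := mul_nonneg hun.1 (by linarith [hg.2])
    rw [h1, abs_of_nonneg h2, abs_of_nonneg (by nlinarith [hm, hg.2, hu.1] : (0:ℝ) ≤ u - w)]
    nlinarith [hm]
  · simp only [h, if_false]
    push_neg at h
    have hg := hh_mem hu hw (not_le.mpr h)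
    have hm := hh_mul hu hw (not_le.mpr h)
    have h1 : un - (un + (1 - un) * hh u w) = -((1 - un) * hh u w) := by ring
    have h2 : 0 ≤ (1 - un) * hh u w := mul_nonneg (by linarith [hun.2]) hg.1
    rw [h1, abs_neg, abs_of_nonneg h2, abs_of_nonpos (by linarith : u - w ≤ 0)]
    nlinarith [hm]

lemma abs_mk_le (hu : u ∈ Icc (0:ℝ) 1) (hw : w ∈ Icc (0:ℝ) 1) : |mk u w| ≤ 1 := by
  unfold mk
  by_cases h : w ≤ u
  · simp only [h, if_true]
    have hg := gg_mem hu hw h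
    rw [abs_le]; constructor <;> linarith [hg.1, hg.2]
  · simp only [h, if_false]
    have hg := hh_mem hu hw h
    rw [abs_le]; constructor <;> linarith [hg.1, hg.2]

lemma abs_km_le (hu : u ∈ Icc (0:ℝ) 1) (hw : w ∈ Icc (0:ℝ) 1) : |km u w| ≤ 1 := by
  unfold km
  by_cases h : w ≤ u
  · simp only [h, if_true]
    have hg := gg_mem hu hw h
    rw [abs_le]; constructor <;> linarith [hg.1, hg.2]
  · simp only [h, if_false]
    have hg := hh_mem hu hw h
    rw [abs_le]; constructor <;> linarith [hg.1, hg.2]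


lemma nuP_restrict_rect {A B : Set ℝ} (hA : MeasurableSet A) (hB : MeasurableSet B) :
    nuP.restrict (A ×ˢ B) = nuP.restrict ((A ∩ I01) ×ˢ (B ∩ I01)) := by
  unfold nuP
  rw [← Measure.prod_restrict, ← Measure.prod_restrict,
    Measure.restrict_restrict hA, Measure.restrict_restrict hB,
    Measure.restrict_restrict (hA.inter I01_meas), Measure.restrict_restrict (hB.inter I01_meas),
    inter_assoc, inter_self, inter_assoc, inter_self]

lemma rect_le_cut {f : ℝ → ℝ → ℝ} (hfm : Measurable (uncurry f)) {M : ℝ} (hM0 : 0 ≤ M)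
    (hb : ∀ x y, |f x y| ≤ M) {A B : Set ℝ} (hA : MeasurableSet A) (hB : MeasurableSet B) :
    |∫ p in A ×ˢ B, f p.1 p.2 ∂nuP| ≤ cutNorm f := by
  rw [nuP_restrict_rect hA hB,
    ← iter_eq hfm (fun p => hb p.1 p.2) (hA.inter I01_meas) (hB.inter I01_meas)
      inter_subset_right inter_subset_right]
  exact le_cutNorm hM0 hb (hA.inter I01_meas) (hB.inter I01_meas)
    inter_subset_right inter_subset_right

lemma abs_diff_le_one {a b : ℝ} (ha : a ∈ Icc (0:ℝ) 1) (hb : b ∈ Icc (0:ℝ) 1) :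
    |a - b| ≤ 1 := by
  rw [abs_le]
  obtain ⟨ha1, ha2⟩ := ha
  obtain ⟨hb1, hb2⟩ := hb
  constructor <;> linarith

lemma tendsto_pair {U : ℝ → ℝ → ℝ} {Useq : ℕ → ℝ → ℝ → ℝ}
    (hUm : Measurable (Function.uncurry U)) (hUsm : ∀ n, Measurable (Function.uncurry (Useq n)))
    (hUb : ∀ x y, U x y ∈ Icc (0:ℝ) 1) (hUsb : ∀ n x y, Useq n x y ∈ Icc (0:ℝ) 1)
    (hUconv : Filter.Tendsto (fun n => cutNorm fun x y => Useq n x y - U x y)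
      Filter.atTop (nhds 0))
    {m : ℝ × ℝ → ℝ} (hm : Measurable m) (hmb : ∀ p, |m p| ≤ 1) {ε : ℝ} (hε : 0 < ε) :
    ∃ N, ∀ n ≥ N, ∀ S T : Set ℝ, MeasurableSet S → MeasurableSet T →
      |∫ p in S ×ˢ T, (Useq n p.1 p.2 - U p.1 p.2) * m p ∂nuP| ≤ ε := by
  obtain ⟨δ, hδ, hA⟩ := lemmaA hm hmb hε
  obtain ⟨N, hN⟩ := (Metric.tendsto_atTop.1 hUconv) δ hδ
  refine ⟨N, fun n hn S T hS hT => ?_⟩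
  have hdm : Measurable (uncurry fun x y => Useq n x y - U x y) := (hUsm n).sub hUm
  have hdb : ∀ x y, |Useq n x y - U x y| ≤ 1 := fun x y =>
    abs_diff_le_one (hUsb n x y) (hUb x y)
  have hcut : cutNorm (fun x y => Useq n x y - U x y) < δ := by
    have := hN n hn
    rw [Real.dist_eq, sub_zero] at this
    exact lt_of_le_of_lt (le_abs_self _) this
  have hrect : ∀ A B : Set ℝ, MeasurableSet A → MeasurableSet B →
      |∫ p in A ×ˢ B, (Useq n p.1 p.2 - U p.1 p.2) ∂nuP| ≤ δ := by
    intro A B hAm hBm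
    exact le_of_lt (lt_of_le_of_lt
      (rect_le_cut hdm zero_le_one hdb hAm hBm) hcut)
  have := hA (fun p => Useq n p.1 p.2 - U p.1 p.2) hdm (fun p => hdb p.1 p.2) hrect S T hS hT
  calc |∫ p in S ×ˢ T, (Useq n p.1 p.2 - U p.1 p.2) * m p ∂nuP|
      = |∫ p in S ×ˢ T, m p * (Useq n p.1 p.2 - U p.1 p.2) ∂nuP| := by
        congr 1
        exact integral_congr_ae (Filter.EventuallyEq.of_eq (funext fun p => mul_comm _ _))
    _ ≤ ε := this

end CutAux

theorem exists_seq_l1_tendsto_of_cut_tendsto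
    (U : ℝ → ℝ → ℝ) (Useq : ℕ → ℝ → ℝ → ℝ)
    (hU : IsGraphon U) (hUseq : ∀ n, IsGraphon (Useq n))
    (hUconv : Tendsto (fun n => cutNorm fun x y => Useq n x y - U x y) atTop (nhds 0)) :
    ∀ W : ℝ → ℝ → ℝ, IsGraphon W →
      ∃ Wseq : ℕ → ℝ → ℝ → ℝ, (∀ n, IsGraphon (Wseq n)) ∧
        Tendsto (fun n => cutNorm fun x y => Wseq n x y - W x y) atTop (nhds 0) ∧
        Tendsto (fun n => l1Norm fun x y => Useq n x y - Wseq n x y) atTop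
          (nhds (l1Norm fun x y => U x y - W x y)) := by
  intro W hW
  classical
  obtain ⟨hUm, hUsym, hUb⟩ := hU
  obtain ⟨hWm, hWsym, hWb⟩ := hW
  have hUm' : Measurable fun p : ℝ × ℝ => U p.1 p.2 := hUm
  have hWm' : Measurable fun p : ℝ × ℝ => W p.1 p.2 := hWm
  have hUsm' : ∀ n, Measurable fun p : ℝ × ℝ => Useq n p.1 p.2 := fun n => (hUseq n).1
  have mzero : MeasurableSet {p : ℝ × ℝ | U p.1 p.2 = 0} :=
    measurableSet_eq_fun hUm' measurable_const
  have mcond : MeasurableSet {p : ℝ × ℝ | W p.1 p.2 ≤ U p.1 p.2} :=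
    measurableSet_le hWm' hUm'
  have mgg : Measurable fun p : ℝ × ℝ => CutAux.gg (U p.1 p.2) (W p.1 p.2) := by
    simp only [CutAux.gg]
    exact Measurable.ite mzero measurable_const (hWm'.div hUm')
  have mhh : Measurable fun p : ℝ × ℝ => CutAux.hh (U p.1 p.2) (W p.1 p.2) := by
    simp only [CutAux.hh]
    exact (hWm'.sub hUm').div (measurable_const.sub hUm')
  have mmk : Measurable fun p : ℝ × ℝ => CutAux.mk (U p.1 p.2) (W p.1 p.2) := by
    simp only [CutAux.mk]
    exact Measurable.ite mcond mgg (measurable_const.sub mhh)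
  have mkm : Measurable fun p : ℝ × ℝ => CutAux.km (U p.1 p.2) (W p.1 p.2) := by
    simp only [CutAux.km]
    exact Measurable.ite mcond (measurable_const.sub mgg) mhh.neg
  set Wn : ℕ → ℝ → ℝ → ℝ := fun n x y => CutAux.wn (Useq n x y) (U x y) (W x y) with hWndef
  have mWn : ∀ n, Measurable fun p : ℝ × ℝ => Wn n p.1 p.2 := by
    intro n
    simp only [hWndef, CutAux.wn]
    exact Measurable.ite mcond ((hUsm' n).mul mgg)
      ((hUsm' n).add ((measurable_const.sub (hUsm' n)).mul mhh))
  have hWnG : ∀ n, IsGraphon (Wn n) := by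
    intro n
    refine ⟨mWn n, ?_, ?_⟩
    · intro x y
      simp only [hWndef]
      rw [hUsym x y, hWsym x y, (hUseq n).2.1 x y]
    · intro x y
      exact CutAux.wn_mem ((hUseq n).2.2 x y) (hUb x y) (hWb x y)
  have hmb : ∀ p : ℝ × ℝ, |CutAux.mk (U p.1 p.2) (W p.1 p.2)| ≤ 1 := fun p =>
    CutAux.abs_mk_le (hUb p.1 p.2) (hWb p.1 p.2)
  have hkb : ∀ p : ℝ × ℝ, |CutAux.km (U p.1 p.2) (W p.1 p.2)| ≤ 1 := fun p =>
    CutAux.abs_km_le (hUb p.1 p.2) (hWb p.1 p.2)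
  refine ⟨Wn, hWnG, ?_, ?_⟩
  · -- cut norm convergence
    rw [Metric.tendsto_atTop]
    intro ε hε
    obtain ⟨N, hN⟩ := CutAux.tendsto_pair hUm (fun n => (hUseq n).1) hUb
      (fun n => (hUseq n).2.2) hUconv mmk hmb (half_pos hε)
    refine ⟨N, fun n hn => ?_⟩
    rw [Real.dist_eq, sub_zero]
    have hdiffb : ∀ x y, |Wn n x y - W x y| ≤ 1 := fun x y =>
      CutAux.abs_diff_le_one ((hWnG n).2.2 x y) (hWb x y)
    have hdiffm : Measurable (Function.uncurry fun x y => Wn n x y - W x y) :=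
      (mWn n).sub hWm'
    have hle : cutNorm (fun x y => Wn n x y - W x y) ≤ ε / 2 := by
      apply CutAux.cutNorm_le (le_of_lt (half_pos hε))
      intro S T hS hT hS1 hT1
      rw [CutAux.iter_eq hdiffm (fun p => hdiffb p.1 p.2) hS hT hS1 hT1]
      have heq : (∫ p in S ×ˢ T, (Wn n p.1 p.2 - W p.1 p.2) ∂CutAux.nuP)
          = ∫ p in S ×ˢ T, (Useq n p.1 p.2 - U p.1 p.2)
              * CutAux.mk (U p.1 p.2) (W p.1 p.2) ∂CutAux.nuP := by
        apply integral_congr_ae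
        apply Filter.EventuallyEq.of_eq
        funext p
        exact CutAux.wn_sub ((hUseq n).2.2 p.1 p.2) (hUb p.1 p.2) (hWb p.1 p.2)
      calc |∫ p in S ×ˢ T, (Wn n p.1 p.2 - W p.1 p.2) ∂CutAux.nuP|
          = |∫ p in S ×ˢ T, (Useq n p.1 p.2 - U p.1 p.2)
              * CutAux.mk (U p.1 p.2) (W p.1 p.2) ∂CutAux.nuP| := by rw [heq]
        _ ≤ ε / 2 := hN n hn S T hS hT
    have hge : 0 ≤ cutNorm (fun x y => Wn n x y - W x y) :=
      CutAux.cutNorm_nonneg zero_le_one hdiffb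
    rw [abs_of_nonneg hge]
    exact lt_of_le_of_lt hle (half_lt_self hε)
  · -- L¹ convergence
    haveI : IsFiniteMeasure (CutAux.nuP.restrict (I01 ×ˢ I01)) := by
      constructor
      rw [Measure.restrict_apply_univ]
      exact measure_lt_top _ _
    set e : ℕ → ℝ := fun n => ∫ p in I01 ×ˢ I01,
      (Useq n p.1 p.2 - U p.1 p.2) * CutAux.km (U p.1 p.2) (W p.1 p.2) ∂CutAux.nuP with hedef
    have hkey : ∀ n, (l1Norm fun x y => Useq n x y - Wn n x y)
        = (l1Norm fun x y => U x y - W x y) + e n := by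
      intro n
      have h1 : (l1Norm fun x y => Useq n x y - Wn n x y)
          = ∫ p in I01 ×ˢ I01, |Useq n p.1 p.2 - Wn n p.1 p.2| ∂CutAux.nuP := by
        unfold l1Norm
        exact CutAux.iter_eq (f := fun x y => |Useq n x y - Wn n x y|)
          (((hUsm' n).sub (mWn n)).abs) (M := 1)
          (fun p => by
            show |(|Useq n p.1 p.2 - Wn n p.1 p.2|)| ≤ 1
            rw [abs_abs]
            exact CutAux.abs_diff_le_one ((hUseq n).2.2 p.1 p.2) ((hWnG n).2.2 p.1 p.2))
          CutAux.I01_meas CutAux.I01_meas subset_rfl subset_rfl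
      have h4 : (l1Norm fun x y => U x y - W x y)
          = ∫ p in I01 ×ˢ I01, |U p.1 p.2 - W p.1 p.2| ∂CutAux.nuP := by
        unfold l1Norm
        exact CutAux.iter_eq (f := fun x y => |U x y - W x y|)
          ((hUm'.sub hWm').abs) (M := 1)
          (fun p => by
            show |(|U p.1 p.2 - W p.1 p.2|)| ≤ 1
            rw [abs_abs]
            exact CutAux.abs_diff_le_one (hUb p.1 p.2) (hWb p.1 p.2))
          CutAux.I01_meas CutAux.I01_meas subset_rfl subset_rfl
      have h2 : (∫ p in I01 ×ˢ I01, |Useq n p.1 p.2 - Wn n p.1 p.2| ∂CutAux.nuP)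
          = ∫ p in I01 ×ˢ I01, (|U p.1 p.2 - W p.1 p.2|
              + (Useq n p.1 p.2 - U p.1 p.2)
                * CutAux.km (U p.1 p.2) (W p.1 p.2)) ∂CutAux.nuP := by
        apply integral_congr_ae
        apply Filter.EventuallyEq.of_eq
        funext p
        exact CutAux.abs_sub_wn ((hUseq n).2.2 p.1 p.2) (hUb p.1 p.2) (hWb p.1 p.2)
      have int1 : Integrable (fun p : ℝ × ℝ => |U p.1 p.2 - W p.1 p.2|)
          (CutAux.nuP.restrict (I01 ×ˢ I01)) :=
        CutAux.integrable_of_bdd (M := 1) ((hUm'.sub hWm').abs).aestronglyMeasurable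
          (fun p => by
            show |(|U p.1 p.2 - W p.1 p.2|)| ≤ 1
            rw [abs_abs]
            exact CutAux.abs_diff_le_one (hUb p.1 p.2) (hWb p.1 p.2))
      have int2 : Integrable (fun p : ℝ × ℝ => (Useq n p.1 p.2 - U p.1 p.2)
          * CutAux.km (U p.1 p.2) (W p.1 p.2)) (CutAux.nuP.restrict (I01 ×ˢ I01)) :=
        CutAux.integrable_of_bdd (M := 1) (((hUsm' n).sub hUm').mul mkm).aestronglyMeasurable
          (fun p => by
            rw [abs_mul]
            have := mul_le_mul (CutAux.abs_diff_le_one ((hUseq n).2.2 p.1 p.2) (hUb p.1 p.2))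
              (hkb p) (abs_nonneg _) zero_le_one
            simpa using this)
      rw [h1, h2, integral_add int1 int2, h4, hedef]
    have heconv : Tendsto e atTop (nhds 0) := by
      rw [Metric.tendsto_atTop]
      intro ε hε
      obtain ⟨N, hN⟩ := CutAux.tendsto_pair hUm (fun n => (hUseq n).1) hUb
        (fun n => (hUseq n).2.2) hUconv mkm hkb (half_pos hε)
      refine ⟨N, fun n hn => ?_⟩
      rw [Real.dist_eq, sub_zero]
      exact lt_of_le_of_lt (hN n hn I01 I01 CutAux.I01_meas CutAux.I01_meas)
        (half_lt_self hε)
    have hfun : (fun n => l1Norm fun x y => Useq n x y - Wn n x y)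
        = fun n => (l1Norm fun x y => U x y - W x y) + e n := funext hkey
    rw [hfun]
    simpa using tendsto_const_nhds.add heconv

end
end

section
/- Suppose U, W ∈ W₀ and (Uₙ), (Wₙ) are sequences in W₀ with δ_□(Uₙ,U) → 0 and δ_□(Wₙ,W) → 0 as n → ∞. Then liminf_{n→∞} δ₁(Wₙ,Uₙ) ≥ δ₁(W,U). -/
open MeasureTheory Filter Topology
open scoped ENNReal

noncomputable section

namespace LS
open Set


lemma measI : MeasurableSet I01 := measurableSet_Icc

lemma volI : volume I01 = 1 := by simp [I01, Real.volume_Icc]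

lemma vol_lt_top {S : Set ℝ} (hS : S ⊆ I01) : volume S < ⊤ :=
  lt_of_le_of_lt (le_trans (measure_mono hS) (le_of_eq volI)) (by norm_num)

lemma vol_toReal_le {S : Set ℝ} (hS : S ⊆ I01) : (volume S).toReal ≤ 1 := by
  have h1 : volume S ≤ 1 := le_trans (measure_mono hS) (le_of_eq volI)
  calc (volume S).toReal ≤ (1 : ℝ≥0∞).toReal := ENNReal.toReal_mono (by norm_num) h1
    _ = 1 := by simp

/-- Bounded measurable kernels. -/
def Ker (V : ℝ → ℝ → ℝ) (C : ℝ) : Prop :=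
  Measurable (Function.uncurry V) ∧ ∀ x y, |V x y| ≤ C

namespace Ker

variable {V V' : ℝ → ℝ → ℝ} {C C' : ℝ}

lemma nonnegC (h : Ker V C) : 0 ≤ C := le_trans (abs_nonneg _) (h.2 0 0)

lemma sec (h : Ker V C) (x : ℝ) : Measurable (V x) :=
  h.1.comp measurable_prodMk_left

lemma abs (h : Ker V C) : Ker (fun x y => |V x y|) C :=
  ⟨h.1.abs, fun x y => by simpa using h.2 x y⟩

lemma sub (h : Ker V C) (h' : Ker V' C') :
    Ker (fun x y => V x y - V' x y) (C + C') :=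
  ⟨h.1.sub h'.1, fun x y => le_trans (abs_sub _ _) (add_le_add (h.2 x y) (h'.2 x y))⟩

lemma add (h : Ker V C) (h' : Ker V' C') :
    Ker (fun x y => V x y + V' x y) (C + C') :=
  ⟨h.1.add h'.1, fun x y => le_trans (abs_add_le _ _) (add_le_add (h.2 x y) (h'.2 x y))⟩

lemma comp2 (h : Ker V C) {φ ψ : ℝ → ℝ} (hφ : Measurable φ) (hψ : Measurable ψ) :
    Ker (fun x y => V (φ x) (ψ y)) C := by
  refine ⟨?_, fun x y => h.2 _ _⟩
  have : (Function.uncurry fun x y => V (φ x) (ψ y)) =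
      (Function.uncurry V) ∘ (Prod.map φ ψ) := rfl
  rw [this]
  exact h.1.comp (hφ.prodMap hψ)

lemma weaken (h : Ker V C) (hCC : C ≤ C') : Ker V C' :=
  ⟨h.1, fun x y => le_trans (h.2 x y) hCC⟩

lemma intOn (h : Ker V C) (x : ℝ) {T : Set ℝ} (hTs : T ⊆ I01) :
    IntegrableOn (V x) T volume := by
  refine Measure.integrableOn_of_bounded (M := C) (ne_of_lt (vol_lt_top hTs))
    (h.sec x).aestronglyMeasurable ?_
  exact ae_of_all _ fun y => by simpa using h.2 x y

/-- The inner integral. -/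
lemma meas_inn (h : Ker V C) (T : Set ℝ) :
    Measurable fun x => ∫ y in T, V x y :=
  (h.1.stronglyMeasurable.integral_prod_right (ν := volume.restrict T)).measurable

lemma inn_bound (h : Ker V C) {T : Set ℝ} (hTs : T ⊆ I01) (x : ℝ) :
    |∫ y in T, V x y| ≤ C := by
  have h1 : ‖∫ y in T, V x y‖ ≤ C * (volume T).toReal :=
    norm_setIntegral_le_of_norm_le_const (vol_lt_top hTs)
      (fun y _ => by simpa using h.2 x y)
  calc |∫ y in T, V x y| ≤ C * (volume T).toReal := by simpa using h1
    _ ≤ C * 1 := mul_le_mul_of_nonneg_left (vol_toReal_le hTs) h.nonnegC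
    _ = C := mul_one C

lemma int_inn (h : Ker V C) {S T : Set ℝ} (hTs : T ⊆ I01) (hSs : S ⊆ I01) :
    IntegrableOn (fun x => ∫ y in T, V x y) S volume := by
  refine Measure.integrableOn_of_bounded (M := C) (ne_of_lt (vol_lt_top hSs))
    (h.meas_inn T).aestronglyMeasurable ?_
  exact ae_of_all _ fun x => by simpa using h.inn_bound hTs x

end Ker

/-- Iterated set integral. -/
def II (S T : Set ℝ) (V : ℝ → ℝ → ℝ) : ℝ := ∫ x in S, ∫ y in T, V x y

lemma l1Norm_eq (V : ℝ → ℝ → ℝ) : l1Norm V = II I01 I01 (fun x y => |V x y|) := rfl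

lemma II_nonneg {S T : Set ℝ} (V : ℝ → ℝ → ℝ) :
    0 ≤ II S T (fun x y => |V x y|) :=
  integral_nonneg fun _ => integral_nonneg fun _ => abs_nonneg _

lemma abs_II_le {V : ℝ → ℝ → ℝ} {C : ℝ} (h : Ker V C) {S T : Set ℝ}
    (hSs : S ⊆ I01) (hTs : T ⊆ I01) :
    |II S T V| ≤ II S T (fun x y => |V x y|) := by
  unfold II
  calc |∫ x in S, ∫ y in T, V x y| ≤ ∫ x in S, |∫ y in T, V x y| := by
        simpa using norm_integral_le_integral_norm (μ := volume.restrict S)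
          (f := fun x => ∫ y in T, V x y)
    _ ≤ ∫ x in S, ∫ y in T, |V x y| := by
        apply integral_mono_of_nonneg (ae_of_all _ fun x => abs_nonneg _)
          (h.abs.int_inn hTs hSs)
        exact ae_of_all _ fun x => by
          simpa using norm_integral_le_integral_norm (μ := volume.restrict T) (f := V x)

lemma II_abs_le_C {V : ℝ → ℝ → ℝ} {C : ℝ} (h : Ker V C) {S T : Set ℝ}
    (hSs : S ⊆ I01) (hTs : T ⊆ I01) :
    II S T (fun x y => |V x y|) ≤ C := by
  unfold II
  have hb : ∀ x, ‖∫ y in T, |V x y|‖ ≤ C := fun x => by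
    rw [Real.norm_eq_abs]; exact h.abs.inn_bound hTs x
  have h1 : ‖∫ x in S, ∫ y in T, |V x y|‖ ≤ C * (volume S).toReal :=
    norm_setIntegral_le_of_norm_le_const (vol_lt_top hSs)
      (fun x _ => hb x)
  calc ∫ x in S, ∫ y in T, |V x y| ≤ ‖∫ x in S, ∫ y in T, |V x y|‖ := le_abs_self _
    _ ≤ C * (volume S).toReal := h1
    _ ≤ C * 1 := mul_le_mul_of_nonneg_left (vol_toReal_le hSs) h.nonnegC
    _ = C := mul_one C

lemma II_mono {V V' : ℝ → ℝ → ℝ} {C C' : ℝ} (h : Ker V C) (h' : Ker V' C')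
    {S T : Set ℝ} (hSs : S ⊆ I01) (hTs : T ⊆ I01)
    (hle : ∀ x y, V x y ≤ V' x y) : II S T V ≤ II S T V' := by
  unfold II
  apply integral_mono (h.int_inn hTs hSs) (h'.int_inn hTs hSs)
  intro x
  exact integral_mono (h.intOn x hTs) (h'.intOn x hTs) (fun y => hle x y)

lemma II_add {V V' : ℝ → ℝ → ℝ} {C C' : ℝ} (h : Ker V C) (h' : Ker V' C')
    {S T : Set ℝ} (hSs : S ⊆ I01) (hTs : T ⊆ I01) :
    II S T (fun x y => V x y + V' x y) = II S T V + II S T V' := by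
  unfold II
  have hin : ∀ x, (∫ y in T, (V x y + V' x y)) = (∫ y in T, V x y) + ∫ y in T, V' x y :=
    fun x => integral_add (h.intOn x hTs) (h'.intOn x hTs)
  rw [show (fun x => ∫ y in T, (V x y + V' x y))
      = fun x => (∫ y in T, V x y) + ∫ y in T, V' x y from funext hin]
  exact integral_add (h.int_inn hTs hSs) (h'.int_inn hTs hSs)

lemma II_sub {V V' : ℝ → ℝ → ℝ} {C C' : ℝ} (h : Ker V C) (h' : Ker V' C')
    {S T : Set ℝ} (hSs : S ⊆ I01) (hTs : T ⊆ I01) :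
    II S T (fun x y => V x y - V' x y) = II S T V - II S T V' := by
  unfold II
  have hin : ∀ x, (∫ y in T, (V x y - V' x y)) = (∫ y in T, V x y) - ∫ y in T, V' x y :=
    fun x => integral_sub (h.intOn x hTs) (h'.intOn x hTs)
  rw [show (fun x => ∫ y in T, (V x y - V' x y))
      = fun x => (∫ y in T, V x y) - ∫ y in T, V' x y from funext hin]
  exact integral_sub (h.int_inn hTs hSs) (h'.int_inn hTs hSs)

lemma II_congr {V V' : ℝ → ℝ → ℝ} {S T : Set ℝ} (hS : MeasurableSet S)
    (hT : MeasurableSet T) (h : ∀ x ∈ S, ∀ y ∈ T, V x y = V' x y) :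
    II S T V = II S T V' := by
  unfold II
  apply setIntegral_congr_fun hS
  intro x hx
  exact setIntegral_congr_fun hT (fun y hy => h x hx y hy)

lemma II_partition {V : ℝ → ℝ → ℝ} {C : ℝ} (h : Ker V C) {ι : Type*}
    {t : Finset ι} {A : ι → Set ℝ}
    (hmeas : ∀ i ∈ t, MeasurableSet (A i)) (hsub : ∀ i ∈ t, A i ⊆ I01)
    (hdisj : Set.Pairwise t (Function.onFun Disjoint A))
    (hcover : I01 = ⋃ i ∈ t, A i) :
    II I01 I01 V = ∑ a ∈ t, ∑ b ∈ t, II (A a) (A b) V := by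
  have hinner : ∀ x, (∫ y in I01, V x y) = ∑ b ∈ t, ∫ y in A b, V x y := by
    intro x
    rw [hcover]
    exact integral_biUnion_finset t hmeas hdisj (fun i hi => h.intOn x (hsub i hi))
  have houter : ∀ b ∈ t, (∫ x in I01, ∫ y in A b, V x y)
      = ∑ a ∈ t, ∫ x in A a, ∫ y in A b, V x y := by
    intro b hb
    rw [hcover]
    exact integral_biUnion_finset t hmeas hdisj
      (fun i hi => (h.int_inn (hsub b hb) (hsub i hi)))
  unfold II
  calc (∫ x in I01, ∫ y in I01, V x y)
      = ∫ x in I01, ∑ b ∈ t, ∫ y in A b, V x y := by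
        exact integral_congr_ae (ae_of_all _ fun x => hinner x)
    _ = ∑ b ∈ t, ∫ x in I01, ∫ y in A b, V x y := by
        apply integral_finset_sum
        intro b hb
        exact h.int_inn (hsub b hb) (subset_refl I01)
    _ = ∑ b ∈ t, ∑ a ∈ t, ∫ x in A a, ∫ y in A b, V x y := by
        exact Finset.sum_congr rfl houter
    _ = ∑ a ∈ t, ∑ b ∈ t, ∫ x in A a, ∫ y in A b, V x y := Finset.sum_comm

lemma II_const {V : ℝ → ℝ → ℝ} {S T : Set ℝ} {c : ℝ} (hS : MeasurableSet S)
    (hT : MeasurableSet T) (h : ∀ x ∈ S, ∀ y ∈ T, V x y = c) :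
    II S T V = ((volume S).toReal * (volume T).toReal) * c := by
  unfold II
  have hin : ∀ x ∈ S, (∫ y in T, V x y) = (volume T).toReal * c := by
    intro x hx
    rw [setIntegral_congr_fun hT (fun y hy => h x hx y hy)]
    simp [smul_eq_mul, Measure.real]
  rw [setIntegral_congr_fun hS hin]
  simp [smul_eq_mul, Measure.real]
  ring

lemma II_abs_of_const {V : ℝ → ℝ → ℝ} {S T : Set ℝ} (hS : MeasurableSet S)
    (hT : MeasurableSet T)
    (hc : ∀ x ∈ S, ∀ y ∈ T, ∀ x' ∈ S, ∀ y' ∈ T, V x y = V x' y') :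
    II S T (fun x y => |V x y|) = |II S T V| := by
  rcases S.eq_empty_or_nonempty with hSe | ⟨x₀, hx₀⟩
  · subst hSe; simp [II]
  rcases T.eq_empty_or_nonempty with hTe | ⟨y₀, hy₀⟩
  · subst hTe; simp [II]
  have h1 : II S T V = ((volume S).toReal * (volume T).toReal) * V x₀ y₀ :=
    II_const hS hT (fun x hx y hy => hc x hx y hy x₀ hx₀ y₀ hy₀)
  have h2 : II S T (fun x y => |V x y|)
      = ((volume S).toReal * (volume T).toReal) * |V x₀ y₀| :=
    II_const hS hT (fun x hx y hy => by rw [hc x hx y hy x₀ hx₀ y₀ hy₀])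
  rw [h1, h2, abs_mul]
  congr 1
  rw [abs_of_nonneg (mul_nonneg ENNReal.toReal_nonneg ENNReal.toReal_nonneg)]

lemma le_cutNorm {V : ℝ → ℝ → ℝ} {C : ℝ} (h : Ker V C) {S T : Set ℝ}
    (hS : MeasurableSet S) (hT : MeasurableSet T) (hSs : S ⊆ I01) (hTs : T ⊆ I01) :
    |II S T V| ≤ cutNorm V := by
  apply le_csSup
  · refine ⟨C, ?_⟩
    rintro r ⟨S', T', hS', hT', hSs', hTs', rfl⟩
    exact le_trans (abs_II_le h hSs' hTs') (II_abs_le_C h hSs' hTs')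
  · exact ⟨S, T, hS, hT, hSs, hTs, rfl⟩

/-! ### Invertible measure preserving maps -/

def idm : InvMP :=
  ⟨id, id, fun _ h => h, fun _ h => h, MeasurePreserving.id _, MeasurePreserving.id _,
   fun _ _ => rfl, fun _ _ => rfl⟩

instance : Nonempty InvMP := ⟨idm⟩

lemma mpMeas (φ : InvMP) : Measurable φ.toFun := φ.measurePreserving.measurable

lemma mpMeasInv (φ : InvMP) : Measurable φ.invFun := φ.measurePreservingInv.measurable

def InvMP.comp (φ ψ : InvMP) : InvMP where
  toFun := φ.toFun ∘ ψ.toFun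
  invFun := ψ.invFun ∘ φ.invFun
  maps := fun x hx => φ.maps _ (ψ.maps x hx)
  mapsInv := fun x hx => ψ.mapsInv _ (φ.mapsInv x hx)
  measurePreserving := φ.measurePreserving.comp ψ.measurePreserving
  measurePreservingInv := ψ.measurePreservingInv.comp φ.measurePreservingInv
  leftInv := fun x hx => by
    simp only [Function.comp_apply]
    rw [φ.leftInv _ (ψ.maps x hx), ψ.leftInv x hx]
  rightInv := fun x hx => by
    simp only [Function.comp_apply]
    rw [ψ.rightInv _ (φ.mapsInv x hx), φ.rightInv x hx]

def InvMP.symm (φ : InvMP) : InvMP where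
  toFun := φ.invFun
  invFun := φ.toFun
  maps := φ.mapsInv
  mapsInv := φ.maps
  measurePreserving := φ.measurePreservingInv
  measurePreservingInv := φ.measurePreserving
  leftInv := φ.rightInv
  rightInv := φ.leftInv

/-- The image of a set under an invertible measure preserving map. -/
def img (φ : InvMP) (A : Set ℝ) : Set ℝ := I01 ∩ φ.invFun ⁻¹' A

lemma img_meas (φ : InvMP) {A : Set ℝ} (hA : MeasurableSet A) :
    MeasurableSet (img φ A) := measI.inter (mpMeasInv φ hA)

lemma img_sub (φ : InvMP) (A : Set ℝ) : img φ A ⊆ I01 := Set.inter_subset_left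

lemma mem_img (φ : InvMP) {A : Set ℝ} (hAs : A ⊆ I01) {x : ℝ} (hx : x ∈ I01) :
    φ.toFun x ∈ img φ A ↔ x ∈ A := by
  constructor
  · rintro ⟨_, h2⟩
    rwa [Set.mem_preimage, φ.leftInv x hx] at h2
  · intro h
    exact ⟨φ.maps x hx, by rw [Set.mem_preimage, φ.leftInv x hx]; exact h⟩

lemma img_I01 (φ : InvMP) : img φ I01 = I01 :=
  Set.ext fun x => ⟨fun h => h.1, fun h => ⟨h, φ.mapsInv x h⟩⟩

lemma restrict_eq {A : Set ℝ} (hA : MeasurableSet A) (hAs : A ⊆ I01) :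
    (volume : Measure ℝ).restrict A = (volume.restrict I01).restrict A := by
  rw [Measure.restrict_restrict hA, Set.inter_eq_self_of_subset_left hAs]

lemma setIntegral_comp (φ : InvMP) {f : ℝ → ℝ} (hf : Measurable f) {A : Set ℝ}
    (hA : MeasurableSet A) (hAs : A ⊆ I01) :
    (∫ x in A, f (φ.toFun x)) = ∫ x in img φ A, f x := by
  have him : MeasurableSet (img φ A) := img_meas φ hA
  calc (∫ x in A, f (φ.toFun x))
      = ∫ x in A, f (φ.toFun x) ∂(volume.restrict I01) := by rw [← restrict_eq hA hAs]
    _ = ∫ x, A.indicator (fun x => f (φ.toFun x)) x ∂(volume.restrict I01) :=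
        (integral_indicator hA).symm
    _ = ∫ x, (img φ A).indicator f (φ.toFun x) ∂(volume.restrict I01) := by
        apply integral_congr_ae
        filter_upwards [self_mem_ae_restrict measI] with x hx
        by_cases hxA : x ∈ A
        · rw [Set.indicator_of_mem hxA, Set.indicator_of_mem ((mem_img φ hAs hx).mpr hxA)]
        · rw [Set.indicator_of_notMem hxA,
            Set.indicator_of_notMem (fun hc => hxA ((mem_img φ hAs hx).mp hc))]
    _ = ∫ y, (img φ A).indicator f y ∂(Measure.map φ.toFun (volume.restrict I01)) := by
        rw [integral_map (mpMeas φ).aemeasurable]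
        rw [φ.measurePreserving.map_eq]
        exact (hf.indicator him).aestronglyMeasurable
    _ = ∫ y, (img φ A).indicator f y ∂(volume.restrict I01) := by
        rw [φ.measurePreserving.map_eq]
    _ = ∫ y in img φ A, f y ∂(volume.restrict I01) := integral_indicator him
    _ = ∫ y in img φ A, f y := by rw [← restrict_eq him (img_sub φ A)]

lemma II_comp (φ : InvMP) {V : ℝ → ℝ → ℝ} {C : ℝ} (h : Ker V C) {A B : Set ℝ}
    (hA : MeasurableSet A) (hB : MeasurableSet B) (hAs : A ⊆ I01) (hBs : B ⊆ I01) :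
    II A B (fun x y => V (φ.toFun x) (φ.toFun y)) = II (img φ A) (img φ B) V := by
  unfold II
  have hin : ∀ x : ℝ, (∫ y in B, V x (φ.toFun y)) = ∫ y in img φ B, V x y := by
    intro x
    exact setIntegral_comp φ (h.sec x) hB hBs
  calc (∫ x in A, ∫ y in B, V (φ.toFun x) (φ.toFun y))
      = ∫ x in A, (fun z => ∫ y in img φ B, V z y) (φ.toFun x) := by
        apply integral_congr_ae
        exact ae_of_all _ fun x => hin (φ.toFun x)
    _ = ∫ x in img φ A, ∫ y in img φ B, V x y :=
        setIntegral_comp φ (h.meas_inn (img φ B)) hA hAs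

lemma II_comp_I01 (φ : InvMP) {V : ℝ → ℝ → ℝ} {C : ℝ} (h : Ker V C) :
    II I01 I01 (fun x y => V (φ.toFun x) (φ.toFun y)) = II I01 I01 V := by
  rw [II_comp φ h measI measI (subset_refl _) (subset_refl _), img_I01]

/-! ### Grid partitions -/

def idx (m : ℕ) (x : ℝ) : ℤ := max ⌈x * m⌉ 1

def rep (m : ℕ) (x : ℝ) : ℝ := (idx m x : ℝ) / m

lemma measurable_idx (m : ℕ) : Measurable (idx m) :=
  Measurable.max ((measurable_id.mul_const _).ceil) measurable_const

lemma measurable_rep (m : ℕ) : Measurable (rep m) := by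
  unfold rep
  apply Measurable.div_const
  exact Measurable.comp measurable_from_top (measurable_idx m)


lemma rep_eq_of_idx_eq {m : ℕ} {x x' : ℝ} (h : idx m x = idx m x') :
    rep m x = rep m x' := by unfold rep; rw [h]

lemma idx_mem {m : ℕ} (hm : 1 ≤ m) {x : ℝ} (hx : x ∈ I01) :
    idx m x ∈ Finset.Icc (1 : ℤ) (m : ℤ) := by
  obtain ⟨hx0, hx1⟩ := hx
  rw [Finset.mem_Icc]
  constructor
  · exact le_max_right _ _
  · apply max_le
    · apply Int.ceil_le.mpr
      push_cast
      calc x * m ≤ 1 * m := by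
            apply mul_le_mul_of_nonneg_right hx1 (by positivity)
        _ = m := one_mul _
    · exact_mod_cast hm

lemma rep_mem {m : ℕ} (hm : 1 ≤ m) {x : ℝ} (hx : x ∈ I01) : rep m x ∈ I01 := by
  have h := idx_mem hm hx
  rw [Finset.mem_Icc] at h
  have hm0 : (0 : ℝ) < m := by exact_mod_cast Nat.pos_of_ne_zero (by omega)
  constructor
  · apply div_nonneg _ (le_of_lt hm0)
    exact_mod_cast le_trans zero_le_one h.1

  · unfold rep
    rw [div_le_one hm0]
    exact_mod_cast h.2

lemma abs_sub_rep {m : ℕ} (hm : 1 ≤ m) {x : ℝ} (hx : x ∈ I01) :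
    |x - rep m x| ≤ 1 / m := by
  obtain ⟨hx0, hx1⟩ := hx
  have hm0 : (0 : ℝ) < m := by exact_mod_cast Nat.pos_of_ne_zero (by omega)
  rw [abs_le]
  unfold rep idx
  rcases le_or_gt (⌈x * m⌉ : ℤ) 0 with hc | hc
  · have hxm : x * m ≤ 0 := by
      by_contra hpos
      push_neg at hpos
      have : (0 : ℤ) < ⌈x * m⌉ := Int.ceil_pos.mpr hpos
      omega
    have hx0' : x = 0 := le_antisymm (by nlinarith) hx0
    have hmax : max ⌈x * m⌉ 1 = 1 := max_eq_right (by omega)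
    rw [hmax, hx0']
    have h0 : (0:ℝ) ≤ 1 / m := by positivity
    constructor
    · norm_num
    · norm_num [h0]
      try linarith
  · have hmax : max ⌈x * m⌉ 1 = ⌈x * m⌉ := max_eq_left hc
    rw [hmax]
    have h1 : x * m ≤ (⌈x * m⌉ : ℝ) := Int.le_ceil _
    have h2 : (⌈x * m⌉ : ℝ) < x * m + 1 := Int.ceil_lt_add_one _
    have hA : (⌈x * m⌉ : ℝ) / m ≤ x + 1 / m := by
      rw [div_le_iff₀ hm0]
      have : (x + 1 / m) * m = x * m + 1 := by field_simp
      rw [this]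
      linarith
    have hB : x ≤ (⌈x * m⌉ : ℝ) / m := by
      rw [le_div_iff₀ hm0]
      linarith
    constructor
    · linarith
    · have : (0 : ℝ) ≤ 1 / m := by positivity
      linarith

def clamp (c : ℝ) : ℝ := max (-1) (min 1 c)

lemma abs_clamp_le (c : ℝ) : |clamp c| ≤ 1 := by
  rw [abs_le]
  constructor
  · exact le_max_left _ _
  · exact max_le (by norm_num) (min_le_left _ _)

lemma measurable_clamp : Measurable clamp := by
  unfold clamp
  exact Measurable.max measurable_const (Measurable.min measurable_const measurable_id)

lemma abs_sub_clamp_le {a b : ℝ} (ha : |a| ≤ 1) : |a - clamp b| ≤ |a - b| := by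
  rw [abs_le] at ha
  unfold clamp
  rcases le_total b (-1) with h1 | h1
  · have : min 1 b = b := min_eq_right (by linarith)
    rw [this, max_eq_left (by linarith)]
    rw [abs_of_nonneg (by linarith), abs_of_nonneg (by linarith)]
    linarith
  · rcases le_total 1 b with h2 | h2
    · rw [min_eq_left h2, max_eq_right (by norm_num)]
      rw [abs_of_nonpos (by linarith), abs_of_nonpos (by linarith)]
      linarith
    · rw [min_eq_right h2, max_eq_right h1]

lemma II_mono_on {V V' : ℝ → ℝ → ℝ} {C C' : ℝ} (h : Ker V C) (h' : Ker V' C')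
    {S T : Set ℝ} (hS : MeasurableSet S) (hT : MeasurableSet T)
    (hSs : S ⊆ I01) (hTs : T ⊆ I01)
    (hle : ∀ x ∈ S, ∀ y ∈ T, V x y ≤ V' x y) : II S T V ≤ II S T V' := by
  unfold II
  apply setIntegral_mono_on (h.int_inn hTs hSs) (h'.int_inn hTs hSs) hS
  intro x hx
  exact setIntegral_mono_on (h.intOn x hTs) (h'.intOn x hTs) hT (fun y hy => hle x hx y hy)

instance : IsFiniteMeasure ((volume : Measure ℝ).restrict I01) := by
  constructor
  rw [Measure.restrict_apply_univ, volI]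
  norm_num

lemma integrable_prodI {V : ℝ → ℝ → ℝ} {C : ℝ} (h : Ker V C) :
    Integrable (Function.uncurry V)
      (((volume : Measure ℝ).restrict I01).prod ((volume : Measure ℝ).restrict I01)) := by
  refine ⟨h.1.aestronglyMeasurable, ?_⟩
  apply HasFiniteIntegral.of_bounded (C := C)
  exact ae_of_all _ fun p => by simpa [Function.uncurry] using h.2 p.1 p.2

lemma II_eq_prod {V : ℝ → ℝ → ℝ} {C : ℝ} (h : Ker V C) :
    (∫ p in I01 ×ˢ I01, V p.1 p.2) = II I01 I01 V := by
  have h1 : ((volume : Measure (ℝ × ℝ))).restrict (I01 ×ˢ I01)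
      = (((volume : Measure ℝ).restrict I01).prod ((volume : Measure ℝ).restrict I01)) := by
    rw [Measure.volume_eq_prod, Measure.prod_restrict]
  rw [show (∫ p in I01 ×ˢ I01, V p.1 p.2)
      = ∫ p, Function.uncurry V p ∂((volume : Measure (ℝ × ℝ))).restrict (I01 ×ˢ I01) from rfl]
  rw [h1, integral_prod _ (integrable_prodI h)]
  rfl

/-! ### Grid approximation -/

lemma grid_error {V : ℝ → ℝ → ℝ} (hV : Ker V 1) {g : ℝ × ℝ → ℝ}
    (hgc : HasCompactSupport g) (hgcont : Continuous g) {ε δ : ℝ}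
    (hε : 0 < ε) (hδ : 0 < δ)
    (hgl : (∫ p in I01 ×ˢ I01, |V p.1 p.2 - g p|) ≤ ε / 2)
    (hmod : ∀ p q : ℝ × ℝ, dist p q < δ → dist (g p) (g q) < ε / 4)
    {m : ℕ} (hm : 1 ≤ m) (hmδ : 1 / (m : ℝ) < δ) :
    II I01 I01 (fun x y => |V x y - clamp (g (rep m x, rep m y))|) ≤ ε := by
  obtain ⟨Cg, hCg⟩ := hgc.exists_bound_of_continuous hgcont
  have hCg' : ∀ p : ℝ × ℝ, |g p| ≤ Cg := fun p => by simpa using hCg p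
  have hCg0 : 0 ≤ Cg := le_trans (abs_nonneg _) (hCg' 0)
  have hrepm : Measurable fun p : ℝ × ℝ => g (rep m p.1, rep m p.2) :=
    hgcont.measurable.comp (((measurable_rep m).comp measurable_fst).prodMk
      ((measurable_rep m).comp measurable_snd))
  have hK1 : Ker (fun x y => clamp (g (rep m x, rep m y))) 1 :=
    ⟨measurable_clamp.comp hrepm, fun x y => abs_clamp_le _⟩
  have hKg : Ker (fun x y => g (x, y)) Cg :=
    ⟨hgcont.measurable.comp (measurable_fst.prodMk measurable_snd), fun x y => hCg' _⟩
  have hV1 : Ker (fun x y => |V x y - clamp (g (rep m x, rep m y))|) 2 := by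
    have := (hV.sub hK1).abs
    norm_num at this
    exact this
  have hV3 : Ker (fun x y => |V x y - g (x, y)|) (1 + Cg) := (hV.sub hKg).abs
  have hV2 : Ker (fun x y => |V x y - g (x, y)| + ε / 4) (1 + Cg + ε / 4) := by
    refine ⟨hV3.1.add_const _, fun x y => ?_⟩
    rw [abs_of_nonneg (by positivity)]
    have := hV3.2 x y
    rw [abs_of_nonneg (abs_nonneg _)] at this
    linarith
  have hmono : ∀ x ∈ I01, ∀ y ∈ I01,
      |V x y - clamp (g (rep m x, rep m y))| ≤ |V x y - g (x, y)| + ε / 4 := by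
    intro x hx y hy
    have h1 : |V x y - clamp (g (rep m x, rep m y))| ≤ |V x y - g (rep m x, rep m y)| :=
      abs_sub_clamp_le (hV.2 x y)
    have h2 : dist ((x, y) : ℝ × ℝ) (rep m x, rep m y) < δ := by
      rw [Prod.dist_eq]
      apply max_lt
      · exact lt_of_le_of_lt (by rw [Real.dist_eq]; exact abs_sub_rep hm hx) hmδ
      · exact lt_of_le_of_lt (by rw [Real.dist_eq]; exact abs_sub_rep hm hy) hmδ
    have h3 : |g (x, y) - g (rep m x, rep m y)| < ε / 4 := by
      rw [← Real.dist_eq]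
      exact hmod _ _ h2
    calc |V x y - clamp (g (rep m x, rep m y))| ≤ |V x y - g (rep m x, rep m y)| := h1
      _ ≤ |V x y - g (x, y)| + |g (x, y) - g (rep m x, rep m y)| := by
          have := abs_sub_le (V x y - g (x, y)) 0 (g (rep m x, rep m y) - g (x, y))
          calc |V x y - g (rep m x, rep m y)|
              = |(V x y - g (x, y)) - (g (rep m x, rep m y) - g (x, y))| := by ring_nf
            _ ≤ |V x y - g (x, y)| + |g (rep m x, rep m y) - g (x, y)| := abs_sub _ _
            _ = |V x y - g (x, y)| + |g (x, y) - g (rep m x, rep m y)| := by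
                rw [abs_sub_comm (g (rep m x, rep m y))]
      _ ≤ |V x y - g (x, y)| + ε / 4 := by linarith
  have hconstK : Ker (fun _ _ : ℝ => ε / 4) (ε / 4) :=
    ⟨measurable_const, fun x y => by rw [abs_of_nonneg (by positivity)]⟩
  calc II I01 I01 (fun x y => |V x y - clamp (g (rep m x, rep m y))|)
      ≤ II I01 I01 (fun x y => |V x y - g (x, y)| + ε / 4) :=
        II_mono_on hV1 hV2 measI measI (subset_refl _) (subset_refl _) hmono
    _ = II I01 I01 (fun x y => |V x y - g (x, y)|) + II I01 I01 (fun _ _ => ε / 4) :=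
        II_add hV3 hconstK (subset_refl _) (subset_refl _)
    _ ≤ ε / 2 + ε / 4 := by
        apply add_le_add
        · rw [← II_eq_prod hV3]
          exact hgl
        · rw [II_const measI measI (fun _ _ _ _ => rfl)]
          calc (volume I01).toReal * (volume I01).toReal * (ε / 4)
              ≤ 1 * 1 * (ε / 4) := by
                apply mul_le_mul_of_nonneg_right _ (by positivity)
                apply mul_le_mul (vol_toReal_le (subset_refl _)) (vol_toReal_le (subset_refl _))
                  ENNReal.toReal_nonneg (by norm_num)
            _ = ε / 4 := by ring
    _ ≤ ε := by linarith


lemma exists_grid {W U : ℝ → ℝ → ℝ} (hW : Ker W 1) (hU : Ker U 1) {ε : ℝ}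
    (hε : 0 < ε) :
    ∃ m : ℕ, 1 ≤ m ∧ ∃ W' U' : ℝ → ℝ → ℝ, Ker W' 1 ∧ Ker U' 1 ∧
      (∀ x y x' y', idx m x = idx m x' → idx m y = idx m y' → W' x y = W' x' y') ∧
      (∀ x y x' y', idx m x = idx m x' → idx m y = idx m y' → U' x y = U' x' y') ∧
      II I01 I01 (fun x y => |W x y - W' x y|) ≤ ε ∧
      II I01 I01 (fun x y => |U x y - U' x y|) ≤ ε := by
  -- continuous approximations
  have key : ∀ V : ℝ → ℝ → ℝ, Ker V 1 → ∃ g : ℝ × ℝ → ℝ,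
      HasCompactSupport g ∧ Continuous g ∧
      (∫ p in I01 ×ˢ I01, |V p.1 p.2 - g p|) ≤ ε / 2 := by
    intro V hV
    set f : ℝ × ℝ → ℝ := (I01 ×ˢ I01).indicator (Function.uncurry V) with hf
    have hfm : Measurable f := hV.1.indicator (measI.prod measI)
    have hfon : IntegrableOn (Function.uncurry V) (I01 ×ˢ I01) volume := by
      refine Measure.integrableOn_of_bounded (M := 1) ?_ hV.1.aestronglyMeasurable ?_
      · rw [Measure.volume_eq_prod, Measure.prod_prod, volI]
        norm_num
      · exact ae_of_all _ fun p => by simpa [Function.uncurry] using hV.2 p.1 p.2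
    have hfi : Integrable f volume := hfon.integrable_indicator (measI.prod measI)
    obtain ⟨g, hgc, hgl, hgcont, hgi⟩ :=
      hfi.exists_hasCompactSupport_integral_sub_le (half_pos hε)
    refine ⟨g, hgc, hgcont, ?_⟩
    have heq : ∀ p ∈ I01 ×ˢ I01, |V p.1 p.2 - g p| = ‖f p - g p‖ := by
      intro p hp
      rw [hf, Set.indicator_of_mem hp]
      simp [Function.uncurry]
    calc (∫ p in I01 ×ˢ I01, |V p.1 p.2 - g p|)
        = ∫ p in I01 ×ˢ I01, ‖f p - g p‖ :=
          setIntegral_congr_fun (measI.prod measI) heq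
      _ ≤ ∫ p, ‖f p - g p‖ := by
          have hint : Integrable (fun p => ‖f p - g p‖) volume := (hfi.sub hgi).norm
          exact setIntegral_le_integral hint (ae_of_all _ fun p => norm_nonneg _)
      _ ≤ ε / 2 := hgl
  obtain ⟨gW, hgWc, hgWcont, hgW⟩ := key W hW
  obtain ⟨gU, hgUc, hgUcont, hgU⟩ := key U hU
  -- uniform continuity
  obtain ⟨δW, hδW, hWmod⟩ := Metric.uniformContinuous_iff.mp
    (hgWc.uniformContinuous_of_continuous hgWcont) (ε / 4) (by positivity)
  obtain ⟨δU, hδU, hUmod⟩ := Metric.uniformContinuous_iff.mp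
    (hgUc.uniformContinuous_of_continuous hgUcont) (ε / 4) (by positivity)
  set δ := min δW δU with hδdef
  have hδ : 0 < δ := lt_min hδW hδU
  obtain ⟨m₀, hm₀⟩ := exists_nat_gt (1 / δ)
  set m := m₀ + 1 with hmdef
  have hm : 1 ≤ m := Nat.le_add_left 1 m₀
  have hmR : (1 : ℝ) / δ < m := by
    calc (1:ℝ)/δ < m₀ := hm₀
      _ ≤ m := by exact_mod_cast Nat.le_succ m₀
  have hm0 : (0 : ℝ) < m := lt_of_le_of_lt (by positivity) hmR
  have hmδ : 1 / (m : ℝ) < δ := by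
    rw [div_lt_iff₀ hm0]
    rw [div_lt_iff₀ hδ] at hmR
    linarith [mul_comm δ (m:ℝ)]
  -- the step kernels
  refine ⟨m, hm, fun x y => clamp (gW (rep m x, rep m y)),
    fun x y => clamp (gU (rep m x, rep m y)), ?_, ?_, ?_, ?_, ?_, ?_⟩
  case _ => exact ⟨measurable_clamp.comp (hgWcont.measurable.comp
      (((measurable_rep m).comp measurable_fst).prodMk
        ((measurable_rep m).comp measurable_snd))),
    fun x y => abs_clamp_le _⟩
  case _ => exact ⟨measurable_clamp.comp (hgUcont.measurable.comp
      (((measurable_rep m).comp measurable_fst).prodMk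
        ((measurable_rep m).comp measurable_snd))),
    fun x y => abs_clamp_le _⟩
  case _ =>
    intro x y x' y' hx hy
    show clamp (gW (rep m x, rep m y)) = clamp (gW (rep m x', rep m y'))
    rw [rep_eq_of_idx_eq hx, rep_eq_of_idx_eq hy]
  case _ =>
    intro x y x' y' hx hy
    show clamp (gU (rep m x, rep m y)) = clamp (gU (rep m x', rep m y'))
    rw [rep_eq_of_idx_eq hx, rep_eq_of_idx_eq hy]
  case _ => exact grid_error hW hgWc hgWcont hε hδ hgW (fun p q h => hWmod (lt_of_lt_of_le h (min_le_left _ _))) hm hmδ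
  case _ => exact grid_error hU hgUc hgUcont hε hδ hgU (fun p q h => hUmod (lt_of_lt_of_le h (min_le_right _ _))) hm hmδ

/-! ### delta1 and deltaCut basics -/

lemma kerOf {V : ℝ → ℝ → ℝ} (h : IsGraphon V) : Ker V 1 :=
  ⟨h.1, fun x y => abs_le.mpr ⟨by linarith [(h.2.2 x y).1], (h.2.2 x y).2⟩⟩

lemma l1Norm_nonneg (V : ℝ → ℝ → ℝ) : 0 ≤ l1Norm V :=
  integral_nonneg fun _ => integral_nonneg fun _ => abs_nonneg _

lemma delta1_le (U W : ℝ → ℝ → ℝ) (φ : InvMP) :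
    delta1 U W ≤ l1Norm (fun x y => U x y - W (φ.toFun x) (φ.toFun y)) := by
  apply ciInf_le
  refine ⟨0, ?_⟩
  rintro r ⟨φ', rfl⟩
  exact l1Norm_nonneg _

/-! ### The main estimate -/

theorem main_aux (U W : ℝ → ℝ → ℝ) (Useq Wseq : ℕ → ℝ → ℝ → ℝ)
    (hU : IsGraphon U) (hW : IsGraphon W)
    (hUseq : ∀ n, IsGraphon (Useq n)) (hWseq : ∀ n, IsGraphon (Wseq n))
    (hUconv : Tendsto (fun n => deltaCut (Useq n) U) atTop (nhds 0))
    (hWconv : Tendsto (fun n => deltaCut (Wseq n) W) atTop (nhds 0))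
    {ε : ℝ} (hε : 0 < ε) :
    ∀ᶠ n in atTop, delta1 W U - ε ≤ delta1 (Wseq n) (Useq n) := by
  have hWk : Ker W 1 := kerOf hW
  have hUk : Ker U 1 := kerOf hU
  obtain ⟨m, hm, W', U', hW'k, hU'k, hW'c, hU'c, hW'e, hU'e⟩ :=
    exists_grid hWk hUk (show (0:ℝ) < ε / 8 by positivity)
  set t : Finset (ℤ × ℤ) := Finset.Icc 1 (m : ℤ) ×ˢ Finset.Icc 1 (m : ℤ) with ht
  set K : ℝ := (t.card : ℝ) with hK
  have hK0 : 0 ≤ K := Nat.cast_nonneg _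
  set η : ℝ := ε / (16 * (K ^ 2 + 1)) with hη
  have hη0 : 0 < η := by positivity
  filter_upwards [hWconv.eventually_lt_const hη0, hUconv.eventually_lt_const hη0]
    with n h1 h2
  -- choose nearly optimal maps
  obtain ⟨ψ, hψ⟩ := exists_lt_of_ciInf_lt h1
  obtain ⟨χ, hχ⟩ := exists_lt_of_ciInf_lt h2
  have hfn : delta1 (Wseq n) (Useq n) < delta1 (Wseq n) (Useq n) + η :=
    lt_add_of_pos_right _ hη0
  obtain ⟨φ, hφ⟩ := exists_lt_of_ciInf_lt hfn
  set θ : InvMP := InvMP.comp χ φ with hθ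
  set ρ : InvMP := InvMP.comp χ (InvMP.comp φ (InvMP.symm ψ)) with hρ
  have hθfun : ∀ x, θ.toFun x = χ.toFun (φ.toFun x) := fun x => rfl
  have hρψ : ∀ x ∈ I01, ρ.toFun (ψ.toFun x) = θ.toFun x := by
    intro x hx
    show χ.toFun (φ.toFun (ψ.invFun (ψ.toFun x))) = χ.toFun (φ.toFun x)
    rw [ψ.leftInv x hx]
  -- kernels
  set Fn : ℝ → ℝ → ℝ := fun x y => Wseq n x y - Useq n (φ.toFun x) (φ.toFun y) with hFn
  set G1 : ℝ → ℝ → ℝ := fun x y => Wseq n x y - W (ψ.toFun x) (ψ.toFun y) with hG1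
  set G2 : ℝ → ℝ → ℝ := fun x y => Useq n x y - U (χ.toFun x) (χ.toFun y) with hG2
  set Yk : ℝ → ℝ → ℝ := fun x y =>
    W' (ψ.toFun x) (ψ.toFun y) - U' (θ.toFun x) (θ.toFun y) with hYk
  set Gn : ℝ → ℝ → ℝ := fun x y =>
    W (ψ.toFun x) (ψ.toFun y) - U (θ.toFun x) (θ.toFun y) with hGn
  have hWnk := kerOf (hWseq n)
  have hUnk := kerOf (hUseq n)
  have hFnk : Ker Fn 2 := by
    exact (hWnk.sub (hUnk.comp2 (mpMeas φ) (mpMeas φ))).weaken (by norm_num)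
  have hG1k : Ker G1 2 := by
    exact (hWnk.sub (hWk.comp2 (mpMeas ψ) (mpMeas ψ))).weaken (by norm_num)
  have hG2k : Ker G2 2 := by
    exact (hUnk.sub (hUk.comp2 (mpMeas χ) (mpMeas χ))).weaken (by norm_num)
  have hG2φk : Ker (fun x y => G2 (φ.toFun x) (φ.toFun y)) 2 :=
    hG2k.comp2 (mpMeas φ) (mpMeas φ)
  have hYkk : Ker Yk 2 :=
    ((hW'k.comp2 (mpMeas ψ) (mpMeas ψ)).sub (hU'k.comp2 (mpMeas θ) (mpMeas θ))).weaken
      (by norm_num)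
  have hGnk : Ker Gn 2 :=
    ((hWk.comp2 (mpMeas ψ) (mpMeas ψ)).sub (hUk.comp2 (mpMeas θ) (mpMeas θ))).weaken
      (by norm_num)
  have hE1k : Ker (fun x y => W (ψ.toFun x) (ψ.toFun y) - W' (ψ.toFun x) (ψ.toFun y)) 2 :=
    ((hWk.comp2 (mpMeas ψ) (mpMeas ψ)).sub (hW'k.comp2 (mpMeas ψ) (mpMeas ψ))).weaken
      (by norm_num)
  have hE2k : Ker (fun x y => U (θ.toFun x) (θ.toFun y) - U' (θ.toFun x) (θ.toFun y)) 2 :=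
    ((hUk.comp2 (mpMeas θ) (mpMeas θ)).sub (hU'k.comp2 (mpMeas θ) (mpMeas θ))).weaken
      (by norm_num)
  -- the transported partition
  set A : ℤ → Set ℝ := fun i => I01 ∩ (fun x => idx m (ψ.toFun x)) ⁻¹' {i} with hA
  set B : ℤ → Set ℝ := fun j => I01 ∩ (fun x => idx m (θ.toFun x)) ⁻¹' {j} with hB
  set D : ℤ × ℤ → Set ℝ := fun p => A p.1 ∩ B p.2 with hD
  have hDmeas : ∀ p : ℤ × ℤ, MeasurableSet (D p) := by
    intro p
    apply MeasurableSet.inter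
    · exact measI.inter (((measurable_idx m).comp (mpMeas ψ)) (measurableSet_singleton _))
    · exact measI.inter (((measurable_idx m).comp (mpMeas θ)) (measurableSet_singleton _))
  have hDsub : ∀ p : ℤ × ℤ, D p ⊆ I01 := fun p =>
    subset_trans Set.inter_subset_left Set.inter_subset_left
  have hDdisj : Set.Pairwise ↑t (Function.onFun Disjoint D) := by
    intro p _ q _ hpq
    rw [Function.onFun]
    rw [Set.disjoint_left]
    rintro x ⟨⟨_, hx1⟩, ⟨_, hx2⟩⟩ ⟨⟨_, hy1⟩, ⟨_, hy2⟩⟩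
    apply hpq
    rw [Set.mem_preimage, Set.mem_singleton_iff] at hx1 hx2 hy1 hy2
    exact Prod.ext (hx1 ▸ hy1.symm ▸ rfl) (hx2 ▸ hy2.symm ▸ rfl)
  have hDcover : I01 = ⋃ p ∈ t, D p := by
    apply Set.Subset.antisymm
    · intro x hx
      have hpt : (idx m (ψ.toFun x), idx m (θ.toFun x)) ∈ t := by
        rw [ht, Finset.mem_product]
        exact ⟨idx_mem hm (ψ.maps x hx), idx_mem hm (θ.maps x hx)⟩
      exact Set.mem_biUnion hpt ⟨⟨hx, rfl⟩, ⟨hx, rfl⟩⟩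
    · intro x hx
      rw [Set.mem_iUnion₂] at hx
      obtain ⟨p, _, hp⟩ := hx
      exact hDsub p hp
  -- Step A : delta1 W U ≤ II |Gn|
  have stepA : delta1 W U ≤ II I01 I01 (fun x y => |Gn x y|) := by
    have h0 : delta1 W U ≤ l1Norm (fun x y => W x y - U (ρ.toFun x) (ρ.toFun y)) :=
      delta1_le W U ρ
    have hZk : Ker (fun x y => |W x y - U (ρ.toFun x) (ρ.toFun y)|) 2 :=
      ((hWk.sub (hUk.comp2 (mpMeas ρ) (mpMeas ρ))).abs).weaken (by norm_num)
    have h1 : l1Norm (fun x y => W x y - U (ρ.toFun x) (ρ.toFun y))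
        = II I01 I01 (fun x y => |W (ψ.toFun x) (ψ.toFun y)
            - U (ρ.toFun (ψ.toFun x)) (ρ.toFun (ψ.toFun y))|) := by
      rw [l1Norm_eq, ← II_comp_I01 ψ hZk]
    have h2 : II I01 I01 (fun x y => |W (ψ.toFun x) (ψ.toFun y)
        - U (ρ.toFun (ψ.toFun x)) (ρ.toFun (ψ.toFun y))|)
        = II I01 I01 (fun x y => |Gn x y|) := by
      apply II_congr measI measI
      intro x hx y hy
      rw [hρψ x hx, hρψ y hy]
    rw [h1, h2] at h0
    exact h0
  -- Step B: II |Gn| ≤ II |Yk| + II |E1| + II |E2|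
  have stepB : II I01 I01 (fun x y => |Gn x y|)
      ≤ II I01 I01 (fun x y => |Yk x y|)
        + II I01 I01 (fun x y => |W (ψ.toFun x) (ψ.toFun y) - W' (ψ.toFun x) (ψ.toFun y)|)
        + II I01 I01 (fun x y => |U (θ.toFun x) (θ.toFun y) - U' (θ.toFun x) (θ.toFun y)|) := by
    have hsumk : Ker (fun x y => |Yk x y|
        + (|W (ψ.toFun x) (ψ.toFun y) - W' (ψ.toFun x) (ψ.toFun y)|
          + |U (θ.toFun x) (θ.toFun y) - U' (θ.toFun x) (θ.toFun y)|)) 6 := by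
      exact (hYkk.abs.add (hE1k.abs.add hE2k.abs)).weaken (by norm_num)
    have hmono := II_mono (C := 2) (C' := 6) hGnk.abs hsumk
      (subset_refl I01) (subset_refl I01) (fun x y => by
        have heq : Gn x y = Yk x y + (W (ψ.toFun x) (ψ.toFun y) - W' (ψ.toFun x) (ψ.toFun y))
            - (U (θ.toFun x) (θ.toFun y) - U' (θ.toFun x) (θ.toFun y)) := by
          simp only [hGn, hYk]; ring
        calc |Gn x y| ≤ |Yk x y|
              + |W (ψ.toFun x) (ψ.toFun y) - W' (ψ.toFun x) (ψ.toFun y)|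
              + |U (θ.toFun x) (θ.toFun y) - U' (θ.toFun x) (θ.toFun y)| := by
              rw [heq]
              exact le_trans (abs_sub _ _) (add_le_add_left (abs_add_le _ _) _)
          _ = _ := by ring)
    have hadd : II I01 I01 (fun x y => |Yk x y|
        + (|W (ψ.toFun x) (ψ.toFun y) - W' (ψ.toFun x) (ψ.toFun y)|
          + |U (θ.toFun x) (θ.toFun y) - U' (θ.toFun x) (θ.toFun y)|))
        = II I01 I01 (fun x y => |Yk x y|)
          + (II I01 I01 (fun x y => |W (ψ.toFun x) (ψ.toFun y) - W' (ψ.toFun x) (ψ.toFun y)|)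
            + II I01 I01 (fun x y => |U (θ.toFun x) (θ.toFun y) - U' (θ.toFun x) (θ.toFun y)|)) := by
      rw [II_add (C := 2) (C' := 4) hYkk.abs ((hE1k.abs.add hE2k.abs).weaken (by norm_num))
        (subset_refl I01) (subset_refl I01)]
      rw [II_add (C := 2) (C' := 2) hE1k.abs hE2k.abs (subset_refl I01) (subset_refl I01)]
    rw [hadd] at hmono
    linarith
  -- Step C: error bounds
  have stepC1 : II I01 I01
      (fun x y => |W (ψ.toFun x) (ψ.toFun y) - W' (ψ.toFun x) (ψ.toFun y)|) ≤ ε / 8 := by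
    have hZ : Ker (fun a b => |W a b - W' a b|) 2 := ((hWk.sub hW'k).abs).weaken (by norm_num)
    calc II I01 I01 (fun x y => |W (ψ.toFun x) (ψ.toFun y) - W' (ψ.toFun x) (ψ.toFun y)|)
        = II I01 I01 (fun a b => |W a b - W' a b|) := II_comp_I01 ψ hZ
      _ ≤ ε / 8 := hW'e
  have stepC2 : II I01 I01
      (fun x y => |U (θ.toFun x) (θ.toFun y) - U' (θ.toFun x) (θ.toFun y)|) ≤ ε / 8 := by
    have hZ : Ker (fun a b => |U a b - U' a b|) 2 := ((hUk.sub hU'k).abs).weaken (by norm_num)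
    calc II I01 I01 (fun x y => |U (θ.toFun x) (θ.toFun y) - U' (θ.toFun x) (θ.toFun y)|)
        = II I01 I01 (fun a b => |U a b - U' a b|) := II_comp_I01 θ hZ
      _ ≤ ε / 8 := hU'e
  -- Step D: partition identity for |Yk|
  have stepD : II I01 I01 (fun x y => |Yk x y|)
      = ∑ a ∈ t, ∑ b ∈ t, |II (D a) (D b) Yk| := by
    rw [II_partition hYkk.abs (fun p _ => hDmeas p) (fun p _ => hDsub p) hDdisj hDcover]
    apply Finset.sum_congr rfl
    intro a _
    apply Finset.sum_congr rfl
    intro b _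
    apply II_abs_of_const (hDmeas a) (hDmeas b)
    rintro x ⟨⟨_, hx1⟩, ⟨_, hx2⟩⟩ y ⟨⟨_, hy1⟩, ⟨_, hy2⟩⟩ x' ⟨⟨_, hx1'⟩, ⟨_, hx2'⟩⟩
      y' ⟨⟨_, hy1'⟩, ⟨_, hy2'⟩⟩
    rw [Set.mem_preimage, Set.mem_singleton_iff] at hx1 hx2 hy1 hy2 hx1' hx2' hy1' hy2'
    show W' (ψ.toFun x) (ψ.toFun y) - U' (θ.toFun x) (θ.toFun y)
        = W' (ψ.toFun x') (ψ.toFun y') - U' (θ.toFun x') (θ.toFun y')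
    rw [hW'c (ψ.toFun x) (ψ.toFun y) (ψ.toFun x') (ψ.toFun y')
        (by rw [hx1, hx1']) (by rw [hy1, hy1']),
      hU'c (θ.toFun x) (θ.toFun y) (θ.toFun x') (θ.toFun y')
        (by rw [hx2, hx2']) (by rw [hy2, hy2'])]
  -- Step E: per-cell decomposition
  have stepE : ∀ a ∈ t, ∀ b ∈ t, |II (D a) (D b) Yk|
      ≤ II (D a) (D b) (fun x y => |Fn x y|)
        + |II (D a) (D b) G1| + |II (D a) (D b) (fun x y => G2 (φ.toFun x) (φ.toFun y))|
        + II (D a) (D b) (fun x y =>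
            |W (ψ.toFun x) (ψ.toFun y) - W' (ψ.toFun x) (ψ.toFun y)|)
        + II (D a) (D b) (fun x y =>
            |U (θ.toFun x) (θ.toFun y) - U' (θ.toFun x) (θ.toFun y)|) := by
    intro a ha b hb
    have hsa := hDsub a
    have hsb := hDsub b
    have hYeq : ∀ x y : ℝ, Yk x y = Fn x y - G1 x y + G2 (φ.toFun x) (φ.toFun y)
        - (W (ψ.toFun x) (ψ.toFun y) - W' (ψ.toFun x) (ψ.toFun y))
        + (U (θ.toFun x) (θ.toFun y) - U' (θ.toFun x) (θ.toFun y)) := by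
      intro x y
      simp only [hYk, hFn, hG1, hG2, hθfun]
      ring
    have k1 : Ker (fun x y => Fn x y - G1 x y) 4 := (hFnk.sub hG1k).weaken (by norm_num)
    have k2 : Ker (fun x y => (Fn x y - G1 x y) + G2 (φ.toFun x) (φ.toFun y)) 6 :=
      (k1.add hG2φk).weaken (by norm_num)
    have k3 : Ker (fun x y => ((Fn x y - G1 x y) + G2 (φ.toFun x) (φ.toFun y))
        - (W (ψ.toFun x) (ψ.toFun y) - W' (ψ.toFun x) (ψ.toFun y))) 8 := by
      have := k2.sub hE1k
      exact this.weaken (by norm_num)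
    have hIIeq : II (D a) (D b) Yk
        = II (D a) (D b) Fn - II (D a) (D b) G1
          + II (D a) (D b) (fun x y => G2 (φ.toFun x) (φ.toFun y))
          - II (D a) (D b) (fun x y =>
              W (ψ.toFun x) (ψ.toFun y) - W' (ψ.toFun x) (ψ.toFun y))
          + II (D a) (D b) (fun x y =>
              U (θ.toFun x) (θ.toFun y) - U' (θ.toFun x) (θ.toFun y)) := by
      have e0 : II (D a) (D b) Yk = II (D a) (D b) (fun x y =>
          (((Fn x y - G1 x y) + G2 (φ.toFun x) (φ.toFun y))
            - (W (ψ.toFun x) (ψ.toFun y) - W' (ψ.toFun x) (ψ.toFun y)))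
          + (U (θ.toFun x) (θ.toFun y) - U' (θ.toFun x) (θ.toFun y))) := by
        apply II_congr (hDmeas a) (hDmeas b)
        intro x _ y _
        rw [hYeq x y]
      rw [e0, II_add k3 hE2k hsa hsb, II_sub k2 hE1k hsa hsb, II_add k1 hG2φk hsa hsb,
        II_sub hFnk hG1k hsa hsb]
    rw [hIIeq]
    have t1 : |II (D a) (D b) Fn| ≤ II (D a) (D b) (fun x y => |Fn x y|) :=
      abs_II_le hFnk hsa hsb
    have t4 : |II (D a) (D b) (fun x y =>
        W (ψ.toFun x) (ψ.toFun y) - W' (ψ.toFun x) (ψ.toFun y))|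
        ≤ II (D a) (D b) (fun x y =>
            |W (ψ.toFun x) (ψ.toFun y) - W' (ψ.toFun x) (ψ.toFun y)|) :=
      abs_II_le hE1k hsa hsb
    have t5 : |II (D a) (D b) (fun x y =>
        U (θ.toFun x) (θ.toFun y) - U' (θ.toFun x) (θ.toFun y))|
        ≤ II (D a) (D b) (fun x y =>
            |U (θ.toFun x) (θ.toFun y) - U' (θ.toFun x) (θ.toFun y)|) :=
      abs_II_le hE2k hsa hsb
    set r1 := II (D a) (D b) Fn
    set r2 := II (D a) (D b) G1
    set r3 := II (D a) (D b) (fun x y => G2 (φ.toFun x) (φ.toFun y))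
    set r4 := II (D a) (D b) (fun x y =>
      W (ψ.toFun x) (ψ.toFun y) - W' (ψ.toFun x) (ψ.toFun y))
    set r5 := II (D a) (D b) (fun x y =>
      U (θ.toFun x) (θ.toFun y) - U' (θ.toFun x) (θ.toFun y))
    have habs : |r1 - r2 + r3 - r4 + r5| ≤ |r1| + |r2| + |r3| + |r4| + |r5| := by
      calc |r1 - r2 + r3 - r4 + r5| ≤ |r1 - r2 + r3 - r4| + |r5| := abs_add_le _ _
        _ ≤ (|r1 - r2 + r3| + |r4|) + |r5| := add_le_add_left (abs_sub _ _) _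
        _ ≤ ((|r1 - r2| + |r3|) + |r4|) + |r5| :=
            add_le_add_left (add_le_add_left (abs_add_le _ _) _) _
        _ ≤ (((|r1| + |r2|) + |r3|) + |r4|) + |r5| :=
            add_le_add_left (add_le_add_left (add_le_add_left (abs_sub _ _) _) _) _
        _ = |r1| + |r2| + |r3| + |r4| + |r5| := by ring
    linarith
  -- Step F: summing up
  have hsumFn : ∑ a ∈ t, ∑ b ∈ t, II (D a) (D b) (fun x y => |Fn x y|)
      = II I01 I01 (fun x y => |Fn x y|) :=
    (II_partition hFnk.abs (fun p _ => hDmeas p) (fun p _ => hDsub p) hDdisj hDcover).symm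
  have hcutG1 : ∀ a ∈ t, ∀ b ∈ t, |II (D a) (D b) G1| ≤ η := by
    intro a ha b hb
    exact le_trans (le_cutNorm hG1k (hDmeas a) (hDmeas b) (hDsub a) (hDsub b)) (le_of_lt hψ)
  have hcutG2 : ∀ a ∈ t, ∀ b ∈ t,
      |II (D a) (D b) (fun x y => G2 (φ.toFun x) (φ.toFun y))| ≤ η := by
    intro a ha b hb
    rw [II_comp φ hG2k (hDmeas a) (hDmeas b) (hDsub a) (hDsub b)]
    exact le_trans (le_cutNorm hG2k (img_meas φ (hDmeas a)) (img_meas φ (hDmeas b))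
      (img_sub φ _) (img_sub φ _)) (le_of_lt hχ)
  have hsumE1 : ∑ a ∈ t, ∑ b ∈ t, II (D a) (D b) (fun x y =>
      |W (ψ.toFun x) (ψ.toFun y) - W' (ψ.toFun x) (ψ.toFun y)|)
      = II I01 I01 (fun x y =>
          |W (ψ.toFun x) (ψ.toFun y) - W' (ψ.toFun x) (ψ.toFun y)|) :=
    (II_partition hE1k.abs (fun p _ => hDmeas p) (fun p _ => hDsub p) hDdisj hDcover).symm
  have hsumE2 : ∑ a ∈ t, ∑ b ∈ t, II (D a) (D b) (fun x y =>
      |U (θ.toFun x) (θ.toFun y) - U' (θ.toFun x) (θ.toFun y)|)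
      = II I01 I01 (fun x y =>
          |U (θ.toFun x) (θ.toFun y) - U' (θ.toFun x) (θ.toFun y)|) :=
    (II_partition hE2k.abs (fun p _ => hDmeas p) (fun p _ => hDsub p) hDdisj hDcover).symm
  -- combine the per-cell bounds
  have hYsum : ∑ a ∈ t, ∑ b ∈ t, |II (D a) (D b) Yk|
      ≤ II I01 I01 (fun x y => |Fn x y|) + K ^ 2 * η + K ^ 2 * η
        + II I01 I01 (fun x y => |W (ψ.toFun x) (ψ.toFun y) - W' (ψ.toFun x) (ψ.toFun y)|)
        + II I01 I01 (fun x y => |U (θ.toFun x) (θ.toFun y) - U' (θ.toFun x) (θ.toFun y)|) := by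
    have h5 : ∑ a ∈ t, ∑ b ∈ t, |II (D a) (D b) Yk|
        ≤ ∑ a ∈ t, ∑ b ∈ t, (II (D a) (D b) (fun x y => |Fn x y|)
          + |II (D a) (D b) G1| + |II (D a) (D b) (fun x y => G2 (φ.toFun x) (φ.toFun y))|
          + II (D a) (D b) (fun x y =>
              |W (ψ.toFun x) (ψ.toFun y) - W' (ψ.toFun x) (ψ.toFun y)|)
          + II (D a) (D b) (fun x y =>
              |U (θ.toFun x) (θ.toFun y) - U' (θ.toFun x) (θ.toFun y)|)) := by
      apply Finset.sum_le_sum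
      intro a ha
      apply Finset.sum_le_sum
      intro b hb
      exact stepE a ha b hb
    simp only [Finset.sum_add_distrib] at h5
    have hb1 : ∑ a ∈ t, ∑ b ∈ t, |II (D a) (D b) G1| ≤ K ^ 2 * η := by
      calc ∑ a ∈ t, ∑ b ∈ t, |II (D a) (D b) G1| ≤ ∑ a ∈ t, ∑ b ∈ t, η :=
            Finset.sum_le_sum fun a ha => Finset.sum_le_sum fun b hb => hcutG1 a ha b hb
        _ = K ^ 2 * η := by
            rw [Finset.sum_const, Finset.sum_const, nsmul_eq_mul, nsmul_eq_mul, hK]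
            ring
    have hb2 : ∑ a ∈ t, ∑ b ∈ t,
        |II (D a) (D b) (fun x y => G2 (φ.toFun x) (φ.toFun y))| ≤ K ^ 2 * η := by
      calc ∑ a ∈ t, ∑ b ∈ t, |II (D a) (D b) (fun x y => G2 (φ.toFun x) (φ.toFun y))|
          ≤ ∑ a ∈ t, ∑ b ∈ t, η :=
            Finset.sum_le_sum fun a ha => Finset.sum_le_sum fun b hb => hcutG2 a ha b hb
        _ = K ^ 2 * η := by
            rw [Finset.sum_const, Finset.sum_const, nsmul_eq_mul, nsmul_eq_mul, hK]
            ring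
    rw [hsumFn, hsumE1, hsumE2] at h5
    linarith
  -- final arithmetic
  have hl1 : II I01 I01 (fun x y => |Fn x y|) < delta1 (Wseq n) (Useq n) + η := by
    rw [← l1Norm_eq]
    exact hφ
  have hηbound : (2 * K ^ 2 + 1) * η ≤ ε / 8 := by
    rw [hη]
    have h2 : (2 * K ^ 2 + 1) ≤ 2 * (K ^ 2 + 1) := by linarith
    calc (2 * K ^ 2 + 1) * (ε / (16 * (K ^ 2 + 1)))
        ≤ (2 * (K ^ 2 + 1)) * (ε / (16 * (K ^ 2 + 1))) :=
          mul_le_mul_of_nonneg_right h2 (div_nonneg hε.le (by nlinarith [sq_nonneg K]))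
      _ = ε / 8 := by
          field_simp
          ring
  have := stepA
  rw [← stepD] at hYsum
  linarith [stepB, stepC1, stepC2, hYsum, hl1]

theorem main_final (U W : ℝ → ℝ → ℝ) (Useq Wseq : ℕ → ℝ → ℝ → ℝ)
    (hU : IsGraphon U) (hW : IsGraphon W)
    (hUseq : ∀ n, IsGraphon (Useq n)) (hWseq : ∀ n, IsGraphon (Wseq n))
    (hUconv : Tendsto (fun n => deltaCut (Useq n) U) atTop (nhds 0))
    (hWconv : Tendsto (fun n => deltaCut (Wseq n) W) atTop (nhds 0)) :
    delta1 W U ≤ Filter.liminf (fun n => delta1 (Wseq n) (Useq n)) atTop := by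
  have hub : ∀ n, delta1 (Wseq n) (Useq n) ≤ 2 := by
    intro n
    refine le_trans (delta1_le (Wseq n) (Useq n) idm) ?_
    rw [l1Norm_eq]
    have hk : Ker (fun x y => Wseq n x y - Useq n (idm.toFun x) (idm.toFun y)) 2 :=
      ((kerOf (hWseq n)).sub ((kerOf (hUseq n)).comp2 (mpMeas idm) (mpMeas idm))).weaken
        (by norm_num)
    exact II_abs_le_C hk (subset_refl _) (subset_refl _)
  have cob : IsCoboundedUnder (· ≥ ·) atTop (fun n => delta1 (Wseq n) (Useq n)) :=
    isCoboundedUnder_ge_of_le atTop (x := 2) hub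
  by_contra hcon
  push_neg at hcon
  set L := Filter.liminf (fun n => delta1 (Wseq n) (Useq n)) atTop with hL
  have hε : 0 < (delta1 W U - L) / 2 := by linarith
  have hev := main_aux U W Useq Wseq hU hW hUseq hWseq hUconv hWconv hε
  have := le_liminf_of_le cob hev
  rw [← hL] at this
  linarith

end LS

theorem liminf_delta1_ge_of_deltaCut_tendsto
    (U W : ℝ → ℝ → ℝ) (Useq Wseq : ℕ → ℝ → ℝ → ℝ)
    (hU : IsGraphon U) (hW : IsGraphon W)
    (hUseq : ∀ n, IsGraphon (Useq n)) (hWseq : ∀ n, IsGraphon (Wseq n))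
    (hUconv : Tendsto (fun n => deltaCut (Useq n) U) atTop (nhds 0))
    (hWconv : Tendsto (fun n => deltaCut (Wseq n) W) atTop (nhds 0)) :
    delta1 W U ≤ Filter.liminf (fun n => delta1 (Wseq n) (Useq n)) atTop :=
  LS.main_final U W Useq Wseq hU hW hUseq hWseq hUconv hWconv


end
end
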